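/- arXiv:0705.4487 — 5 statements merged into one kernel-verified Lean document; each statement's English description precedes it below -/
import Mathlib

section
/- For every sequence (f_n)_{n≥1} of measurable real-valued functions on X with ∑_{n=1}^∞ ‖f_n‖_𝒬 < ∞, there exists a measurable function f: X → ℝ with ‖f‖_𝒬 < ∞ such that the partial sums ∑_{k=1}^n f_k converge to f μ-almost everywhere and ‖f − ∑_{k=1}^n f_k‖_𝒬 → 0 as n → ∞. Consequently, the space of (μ-equivalence classes of) measurable functions f with ‖f‖_𝒬 < ∞ is a Banach space under the norm ‖·‖_𝒬. -/
set_option maxHeartbeats 1000000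

open MeasureTheory Filter
open scoped ENNReal

/-- Abstract form of Proposition 3.3: with `‖f‖_𝒬 = sup_{Q ∈ 𝒬} ∫ |f| dQ`, any sequence of
measurable functions whose norms are summable has measurable partial-sum limit `g` with
`‖g‖_𝒬 < ∞`, the partial sums converge to `g` μ-a.e., and `‖g − ∑_{k<n} f_k‖_𝒬 → 0`.
Consequently the space of such functions is a Banach space under `‖·‖_𝒬`. -/
theorem banach_space_of_sup_norm
    {X : Type*} [MeasurableSpace X] (μ : Measure X) [IsProbabilityMeasure μ]
    (𝒬 : Set (Measure X)) (h_ne : 𝒬.Nonempty)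
    (h_prob : ∀ Q ∈ 𝒬, IsProbabilityMeasure Q)
    (h_equiv : ∀ Q ∈ 𝒬, Q ≪ μ ∧ μ ≪ Q)
    (f : ℕ → X → ℝ) (hf : ∀ n, Measurable (f n))
    (hsum : (∑' n, ⨆ Q ∈ 𝒬, ∫⁻ x, ENNReal.ofReal |f n x| ∂Q) ≠ ⊤) :
    ∃ g : X → ℝ, Measurable g ∧
      (⨆ Q ∈ 𝒬, ∫⁻ x, ENNReal.ofReal |g x| ∂Q) ≠ ⊤ ∧
      (∀ᵐ x ∂μ, Tendsto (fun n => ∑ k ∈ Finset.range n, f k x) atTop (nhds (g x))) ∧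
      Tendsto (fun n => ⨆ Q ∈ 𝒬, ∫⁻ x, ENNReal.ofReal |g x - ∑ k ∈ Finset.range n, f k x| ∂Q)
        atTop (nhds 0) := by
  classical
  obtain ⟨Q₀, hQ₀⟩ := h_ne
  obtain ⟨c, hc⟩ : ∃ c : ℕ → ℝ≥0∞,
      c = fun n => ⨆ Q ∈ 𝒬, ∫⁻ x, ENNReal.ofReal |f n x| ∂Q := ⟨_, rfl⟩
  have hsum' : (∑' n, c n) ≠ ⊤ := by rw [hc]; exact hsum
  have hle : ∀ n, ∀ Q ∈ 𝒬, (∫⁻ x, ENNReal.ofReal |f n x| ∂Q) ≤ c n := by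
    intro n Q hQ
    rw [hc]
    exact le_biSup (fun Q => ∫⁻ x, ENNReal.ofReal |f n x| ∂Q) hQ
  -- measurability of the ENNReal abs functions
  have hmeas : ∀ n, Measurable (fun x => ENNReal.ofReal |f n x|) :=
    fun n => ENNReal.measurable_ofReal.comp ((hf n).abs)
  -- the total ENNReal sum function
  obtain ⟨F, hF⟩ : ∃ F : X → ℝ≥0∞, F = fun x => ∑' n, ENNReal.ofReal |f n x| := ⟨_, rfl⟩
  have hFmeas : Measurable F := by rw [hF]; exact Measurable.ennreal_tsum hmeas
  -- integral of F against Q₀ is finite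
  have hFint : (∫⁻ x, F x ∂Q₀) ≠ ⊤ := by
    rw [hF]
    rw [lintegral_tsum (fun n => (hmeas n).aemeasurable)]
    refine ne_top_of_le_ne_top hsum' ?_
    exact ENNReal.tsum_le_tsum fun n => hle n Q₀ hQ₀
  have hFae : ∀ᵐ x ∂Q₀, F x ≠ ⊤ := by
    filter_upwards [ae_lt_top hFmeas hFint] with x hx using hx.ne
  have hFaeμ : ∀ᵐ x ∂μ, F x ≠ ⊤ := (h_equiv Q₀ hQ₀).2 hFae
  -- on {F ≠ ⊤}, the |f n x| are summable
  have hsummable : ∀ x, F x ≠ ⊤ → Summable (fun n => |f n x|) := by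
    intro x hx
    rw [hF] at hx
    have := ENNReal.summable_toReal hx
    simpa [ENNReal.toReal_ofReal (abs_nonneg _)] using this
  -- define g via ENNReal positive/negative parts
  obtain ⟨A, hA⟩ : ∃ A : X → ℝ≥0∞, A = fun x => ∑' n, ENNReal.ofReal (f n x) := ⟨_, rfl⟩
  obtain ⟨B, hB⟩ : ∃ B : X → ℝ≥0∞, B = fun x => ∑' n, ENNReal.ofReal (-(f n x)) := ⟨_, rfl⟩
  have hAmeas : Measurable A := by
    rw [hA]; exact Measurable.ennreal_tsum fun n => ENNReal.measurable_ofReal.comp (hf n)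
  have hBmeas : Measurable B := by
    rw [hB]; exact Measurable.ennreal_tsum fun n => ENNReal.measurable_ofReal.comp ((hf n).neg)
  obtain ⟨g, hg⟩ : ∃ g : X → ℝ, g = fun x => (A x).toReal - (B x).toReal := ⟨_, rfl⟩
  have hgmeas : Measurable g := by
    rw [hg]; exact hAmeas.ennreal_toReal.sub hBmeas.ennreal_toReal
  -- on the good set, g x = ∑' n, f n x
  have hgs : ∀ x, F x ≠ ⊤ → g x = ∑' n, f n x := by
    intro x hx
    have habs := hsummable x hx
    have hp : Summable (fun n => max (f n x) 0) :=
      habs.of_nonneg_of_le (fun n => le_max_right _ _)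
        (fun n => max_le (le_abs_self _) (abs_nonneg _))
    have hm : Summable (fun n => max (-(f n x)) 0) :=
      habs.of_nonneg_of_le (fun n => le_max_right _ _)
        (fun n => max_le (neg_le_abs _) (abs_nonneg _))
    have hAx : A x = ENNReal.ofReal (∑' n, max (f n x) 0) := by
      rw [hA, ENNReal.ofReal_tsum_of_nonneg (fun n => le_max_right _ _) hp]
      refine tsum_congr fun n => ?_
      rcases le_total (f n x) 0 with h | h
      · rw [max_eq_right h, ENNReal.ofReal_eq_zero.2 h, ENNReal.ofReal_zero]
      · rw [max_eq_left h]
    have hBx : B x = ENNReal.ofReal (∑' n, max (-(f n x)) 0) := by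
      rw [hB, ENNReal.ofReal_tsum_of_nonneg (fun n => le_max_right _ _) hm]
      refine tsum_congr fun n => ?_
      rcases le_total (-(f n x)) 0 with h | h
      · rw [max_eq_right h, ENNReal.ofReal_eq_zero.2 h, ENNReal.ofReal_zero]
      · rw [max_eq_left h]
    have h1 : (A x).toReal = ∑' n, max (f n x) 0 := by
      rw [hAx, ENNReal.toReal_ofReal (tsum_nonneg fun n => le_max_right _ _)]
    have h2 : (B x).toReal = ∑' n, max (-(f n x)) 0 := by
      rw [hBx, ENNReal.toReal_ofReal (tsum_nonneg fun n => le_max_right _ _)]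
    rw [hg]
    simp only [h1, h2]
    rw [← Summable.tsum_sub hp hm]
    refine tsum_congr fun n => ?_
    rcases le_total (f n x) 0 with h | h
    · rw [max_eq_right h, max_eq_left (by linarith)]; ring
    · rw [max_eq_left h, max_eq_right (by linarith)]; ring
  -- a.e. convergence of partial sums
  have hconv : ∀ᵐ x ∂μ, Tendsto (fun n => ∑ k ∈ Finset.range n, f k x) atTop (nhds (g x)) := by
    filter_upwards [hFaeμ] with x hx
    rw [hgs x hx]
    exact ((hsummable x hx).of_abs).hasSum.tendsto_sum_nat
  -- the key uniform tail bound
  have hkey : ∀ n, (⨆ Q ∈ 𝒬, ∫⁻ x, ENNReal.ofReal |g x - ∑ k ∈ Finset.range n, f k x| ∂Q)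
      ≤ ∑' k, c (k + n) := by
    intro n
    refine iSup₂_le fun Q hQ => ?_
    have hQae : ∀ᵐ x ∂Q, F x ≠ ⊤ := (h_equiv Q hQ).1 hFaeμ
    have hbound : ∀ᵐ x ∂Q,
        ENNReal.ofReal |g x - ∑ k ∈ Finset.range n, f k x|
          ≤ ∑' k, ENNReal.ofReal |f (k + n) x| := by
      filter_upwards [hQae] with x hx
      have habs := hsummable x hx
      have hsf : Summable (fun k => f k x) := habs.of_abs
      have htail : g x - ∑ k ∈ Finset.range n, f k x = ∑' k, f (k + n) x := by
        rw [hgs x hx, ← Summable.sum_add_tsum_nat_add n hsf]; ring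
      have habs_tail : Summable fun k => |f (k + n) x| :=
        (summable_nat_add_iff n).2 habs
      have hnorm_tail : Summable fun k => ‖f (k + n) x‖ := by
        simpa only [Real.norm_eq_abs] using habs_tail
      have h1 : ‖∑' k, f (k + n) x‖ ≤ ∑' k, ‖f (k + n) x‖ :=
        norm_tsum_le_tsum_norm hnorm_tail
      simp only [Real.norm_eq_abs] at h1
      calc ENNReal.ofReal |g x - ∑ k ∈ Finset.range n, f k x|
          = ENNReal.ofReal |∑' k, f (k + n) x| := by rw [htail]
        _ ≤ ENNReal.ofReal (∑' k, |f (k + n) x|) := ENNReal.ofReal_le_ofReal h1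
        _ = ∑' k, ENNReal.ofReal |f (k + n) x| :=
            ENNReal.ofReal_tsum_of_nonneg (fun k => abs_nonneg _) habs_tail
    calc (∫⁻ x, ENNReal.ofReal |g x - ∑ k ∈ Finset.range n, f k x| ∂Q)
        ≤ ∫⁻ x, ∑' k, ENNReal.ofReal |f (k + n) x| ∂Q := lintegral_mono_ae hbound
      _ = ∑' k, ∫⁻ x, ENNReal.ofReal |f (k + n) x| ∂Q :=
          lintegral_tsum (fun k => (hmeas (k + n)).aemeasurable)
      _ ≤ ∑' k, c (k + n) := ENNReal.tsum_le_tsum fun k => hle (k + n) Q hQ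
  -- tail sums tend to zero
  have htail0 : Tendsto (fun n => ∑' k, c (k + n)) atTop (nhds 0) :=
    ENNReal.tendsto_sum_nat_add c hsum'
  refine ⟨g, hgmeas, ?_, hconv, ?_⟩
  · have h0 := hkey 0
    simp only [Finset.range_zero, Finset.sum_empty, sub_zero] at h0
    refine ne_top_of_le_ne_top ?_ h0
    simpa using hsum'
  · exact tendsto_of_tendsto_of_tendsto_of_le_of_le tendsto_const_nhds htail0
      (fun n => zero_le) hkey
end

section
/- For every nonnegative progressively measurable process c: [0,T]×Ω → [0,∞], the following identity holds (as an equality of values in [0,∞]): ∫_Ω (∫_{(0,T]} c_t(ω) dκ_t(ω)) dQ(ω) = ∫_Ω (∫_{(0,T]} c_t(ω) Y_t(ω) dκ_t(ω)) dP(ω), where for each ω the inner integrals are taken with respect to the Lebesgue–Stieltjes measure on (0,T] induced by the nondecreasing right-continuous path t ↦ κ_t(ω). -/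
open MeasureTheory Filter Set

open scoped ENNReal

namespace LSDM

/-- Generalized right-continuous inverse of `f`, truncated with junk value `T₁`. -/
noncomputable def tau (f : ℝ → ℝ) (T₁ : ℝ) (s : ℝ) : ℝ :=
  sInf (({t | s < f t} ∩ Ioi 0) ∪ {T₁})

variable {f : ℝ → ℝ} {T₁ s t u b : ℝ}

theorem tau_set_subset (hT₁ : 0 < T₁) :
    (({t | s < f t} ∩ Ioi 0) ∪ {T₁}) ⊆ Ioi 0 := by
  rintro x (hx | hx)
  · exact hx.2
  · simp only [mem_singleton_iff] at hx
    simpa [hx] using hT₁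

theorem tau_bddBelow (hT₁ : 0 < T₁) :
    BddBelow (({t | s < f t} ∩ Ioi 0) ∪ {T₁} : Set ℝ) :=
  ⟨0, fun x hx => le_of_lt (tau_set_subset hT₁ hx)⟩

theorem tau_nonneg (hT₁ : 0 < T₁) : 0 ≤ tau f T₁ s :=
  le_csInf ⟨T₁, Or.inr rfl⟩ fun x hx => le_of_lt (tau_set_subset hT₁ hx)

theorem tau_le_of_lt (hT₁ : 0 < T₁)
    (hb : 0 < b) (h : s < f b) : tau f T₁ s ≤ b :=
  csInf_le (tau_bddBelow hT₁) (Or.inl ⟨h, hb⟩)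

theorem tau_le_self (hT₁ : 0 < T₁) : tau f T₁ s ≤ T₁ :=
  csInf_le (tau_bddBelow hT₁) (Or.inr rfl)

/-- If `tau f T₁ s ≤ t < u ≤ T₁` then `s < f u`. -/
theorem lt_of_tau_le (hf : Monotone f) (hT₁ : 0 < T₁)
    (h1 : tau f T₁ s ≤ t) (h2 : t < u) (h3 : u ≤ T₁) : s < f u := by
  have h4 : sInf (({t | s < f t} ∩ Ioi 0) ∪ {T₁}) < u := lt_of_le_of_lt h1 h2
  obtain ⟨x, hx, hxu⟩ :=
    (csInf_lt_iff (tau_bddBelow hT₁) ⟨T₁, Or.inr rfl⟩).mp h4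
  rcases hx with hx | hx
  · exact lt_of_lt_of_le hx.1 (hf hxu.le)
  · exact absurd (hx ▸ hxu) (not_lt.mpr h3)

/-- If `tau f T₁ s ≤ b < T₁` and `f` is right-continuous at `b`, then `s ≤ f b`. -/
theorem le_of_tau_le (hf : Monotone f) (hT₁ : 0 < T₁)
    (hrc : ContinuousWithinAt f (Ici b) b)
    (h1 : tau f T₁ s ≤ b) (h2 : b < T₁) : s ≤ f b := by
  have h3 : Tendsto f (nhdsWithin b (Ioi b)) (nhds (f b)) :=
    hrc.tendsto.mono_left (nhdsWithin_mono b Ioi_subset_Ici_self)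
  refine ge_of_tendsto h3 ?_
  filter_upwards [self_mem_nhdsWithin, Ioo_mem_nhdsGT_of_mem (left_mem_Ico.mpr h2)]
    with u hu hu2
  exact (lt_of_tau_le hf hT₁ h1 hu hu2.2.le).le

/-- If `f b < s` and `0 ≤ b < T₁` and `f` right-continuous at `b`, then `b < tau f T₁ s`. -/
theorem lt_tau_of_lt (hf : Monotone f) (hT₁ : 0 < T₁)
    (hrc : ContinuousWithinAt f (Ici b) b) (hb2 : b < T₁)
    (h : f b < s) : b < tau f T₁ s := by
  by_contra hc
  exact absurd (le_of_tau_le hf hT₁ hrc (not_lt.mp hc) hb2) (not_le.mpr h)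

theorem tau_lt_iff (hf : Monotone f) (hT₁ : 0 < T₁) {r : ℝ} :
    tau f T₁ s < r ↔ (∃ q : ℚ, 0 < (q : ℝ) ∧ (q : ℝ) < r ∧ s < f q) ∨ T₁ < r := by
  constructor
  · intro h
    obtain ⟨x, hx, hxr⟩ :=
      (csInf_lt_iff (tau_bddBelow hT₁) ⟨T₁, Or.inr rfl⟩).mp h
    rcases hx with hx | hx
    · obtain ⟨q, hq1, hq2⟩ := exists_rat_btwn hxr
      exact Or.inl ⟨q, lt_trans hx.2 hq1, hq2, lt_of_lt_of_le hx.1 (hf hq1.le)⟩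
    · simp only [mem_singleton_iff] at hx
      exact Or.inr (hx ▸ hxr)
  · rintro (⟨q, hq0, hqr, hsq⟩ | h)
    · exact lt_of_le_of_lt (csInf_le (tau_bddBelow hT₁) (Or.inl ⟨hsq, hq0⟩)) hqr
    · exact lt_of_le_of_lt (tau_le_self hT₁) h


theorem measurable_tau (hf : Monotone f) (hT₁ : 0 < T₁) :
    Measurable (tau f T₁) := by
  apply measurable_of_Iio
  intro r
  by_cases hr : T₁ < r
  · have : tau f T₁ ⁻¹' Iio r = univ := eq_univ_of_forall fun s =>
      (tau_lt_iff hf hT₁).mpr (Or.inr hr)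
    rw [this]; exact MeasurableSet.univ
  · have : tau f T₁ ⁻¹' Iio r
        = ⋃ q : {q : ℚ // 0 < (q : ℝ) ∧ (q : ℝ) < r}, Iio (f q) := by
      ext s
      simp only [mem_preimage, mem_Iio, tau_lt_iff hf hT₁, hr, or_false, mem_iUnion]
      exact ⟨fun ⟨q, h1, h2, h3⟩ => ⟨⟨q, h1, h2⟩, h3⟩, fun ⟨⟨q, h1, h2⟩, h3⟩ => ⟨q, h1, h2, h3⟩⟩
    rw [this]
    exact MeasurableSet.iUnion fun q => measurableSet_Iio

theorem measurable_tau_prod {Ω : Type*} [MeasurableSpace Ω] {κ : ℝ → Ω → ℝ}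
    (hκ : ∀ q : ℚ, 0 < (q : ℝ) → Measurable (κ q))
    (hmono : ∀ ω, Monotone fun t => κ t ω) (hκ0 : ∀ ω, κ 0 ω = 0) (hT₁ : 0 < T₁) :
    Measurable fun p : ℝ × Ω => tau (fun t => κ t p.2) T₁ p.1 := by
  apply measurable_of_Iio
  intro r
  by_cases hr : T₁ < r
  · have : (fun p : ℝ × Ω => tau (fun t => κ t p.2) T₁ p.1) ⁻¹' Iio r = univ :=
      eq_univ_of_forall fun p =>
        (tau_lt_iff (hmono p.2) hT₁).mpr (Or.inr hr)
    rw [this]; exact MeasurableSet.univ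
  · have : (fun p : ℝ × Ω => tau (fun t => κ t p.2) T₁ p.1) ⁻¹' Iio r
        = ⋃ q : {q : ℚ // 0 < (q : ℝ) ∧ (q : ℝ) < r}, {p : ℝ × Ω | p.1 < κ q p.2} := by
      ext p
      simp only [mem_preimage, mem_Iio, tau_lt_iff (hmono p.2) hT₁, hr, or_false,
        mem_iUnion, mem_setOf_eq]
      exact ⟨fun ⟨q, h1, h2, h3⟩ => ⟨⟨q, h1, h2⟩, h3⟩, fun ⟨⟨q, h1, h2⟩, h3⟩ => ⟨q, h1, h2, h3⟩⟩
    rw [this]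
    refine MeasurableSet.iUnion fun q => ?_
    exact measurableSet_lt measurable_fst ((hκ q q.2.1).comp measurable_snd)

/-- The time change formula: the Lebesgue-Stieltjes integral over `(0, T]` equals a Lebesgue
integral of the time-changed function. -/
theorem timeChange (f : StieltjesFunction ℝ) (hf0 : f 0 = 0) {T : ℝ} (hT : 0 < T)
    (h : ℝ → ℝ≥0∞) (hh : Measurable h) :
    ∫⁻ t in Ioc 0 T, h t ∂f.measure
      = ∫⁻ s in Ici 0, (Ioc 0 T).indicator h (tau f (T + 1) s) ∂volume := by
  have hT₁ : (0 : ℝ) < T + 1 := by linarith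
  have hfm : Monotone f := f.mono
  have hτm : Measurable (tau f (T + 1)) := measurable_tau hfm hT₁
  set ν : Measure ℝ := (volume.restrict (Ici 0)).map (tau f (T + 1)) with hν
  have key : f.measure.restrict (Ioc 0 T) = ν.restrict (Ioc 0 T) := by
    haveI : IsFiniteMeasure (f.measure.restrict (Ioc 0 T)) := by
      constructor
      rw [Measure.restrict_apply_univ, f.measure_Ioc]
      exact ENNReal.ofReal_lt_top
    refine MeasureTheory.Measure.ext_of_Ioc _ _ fun a b hab => ?_
    rw [Measure.restrict_apply measurableSet_Ioc, Measure.restrict_apply measurableSet_Ioc,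
      Ioc_inter_Ioc, hν, Measure.map_apply hτm measurableSet_Ioc,
      Measure.restrict_apply (hτm measurableSet_Ioc)]
    set a' := max a 0
    set b' := min b T
    have ha' : 0 ≤ a' := le_max_right a 0
    have hb'T : b' ≤ T := min_le_right b T
    rcases le_or_gt b' a' with hba | hab'
    · rw [Ioc_eq_empty (not_lt.mpr hba), measure_empty, preimage_empty, empty_inter,
        measure_empty]
    · -- sandwich : Ioo (f a') (f b') ⊆ tau ⁻¹' Ioc a' b' ∩ Ici 0 ⊆ Icc (f a') (f b')
      have hsub1 : Ioo (f a') (f b') ⊆ tau f (T + 1) ⁻¹' Ioc a' b' ∩ Ici 0 := by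
        intro s hs
        have hs0 : 0 ≤ s := le_trans (by simpa [hf0] using hfm ha') hs.1.le
        have hb'0 : 0 < b' := lt_of_le_of_lt ha' hab'
        refine ⟨⟨?_, tau_le_of_lt hT₁ hb'0 hs.2⟩, hs0⟩
        exact lt_tau_of_lt hfm hT₁ (f.right_continuous a') (by linarith) hs.1
      have hsub2 : tau f (T + 1) ⁻¹' Ioc a' b' ∩ Ici 0 ⊆ Icc (f a') (f b') := by
        rintro s ⟨⟨h1, h2⟩, hs0⟩
        constructor
        · rcases eq_or_lt_of_le ha' with ha0 | ha0
          · rw [← ha0, hf0]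
            exact hs0
          · by_contra hc
            exact absurd (tau_le_of_lt hT₁ ha0 (not_le.mp hc)) (not_le.mpr h1)
        · exact le_of_tau_le hfm hT₁ (f.right_continuous b') h2 (by linarith)
      rw [f.measure_Ioc]
      refine le_antisymm ?_ ?_
      · rw [← Real.volume_Ioo]
        exact measure_mono hsub1
      · rw [← Real.volume_Icc]
        exact measure_mono hsub2
  calc ∫⁻ t in Ioc 0 T, h t ∂f.measure
      = ∫⁻ t, h t ∂(ν.restrict (Ioc 0 T)) := by rw [← key]
    _ = ∫⁻ t, (Ioc 0 T).indicator h t ∂ν := (lintegral_indicator measurableSet_Ioc h).symm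
    _ = ∫⁻ s in Ici 0, (Ioc 0 T).indicator h (tau f (T + 1) s) ∂volume :=
        lintegral_map (hh.indicator measurableSet_Ioc) hτm


section LemA

variable {Ω : Type*} {m0 : MeasurableSpace Ω} {P : Measure Ω} [IsProbabilityMeasure P]

/-- If `W n` is a version of `E[Z | m n]`, `W n → V` pointwise with `V` measurable w.r.t. a
σ-algebra `m` contained in all the `m n`, then `∫ Z g = ∫ V g` for every nonnegative
`m`-measurable `g`. -/
theorem lintegral_limit_condexp_mul
    {Z : Ω → ℝ} (hZm : Measurable[m0] Z) (hZ0 : ∀ ω, 0 ≤ Z ω) (hZint : Integrable Z P)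
    {m : MeasurableSpace Ω} {mseq : ℕ → MeasurableSpace Ω} (hm : m ≤ m0)
    (hmseq : ∀ n, mseq n ≤ m0) (hmm : ∀ n, m ≤ mseq n)
    {W : ℕ → Ω → ℝ} (hWm : ∀ n, Measurable[m0] (W n)) (hW : ∀ n, W n =ᵐ[P] (P[Z | mseq n]))
    (hW0 : ∀ n ω, 0 ≤ W n ω)
    {V : Ω → ℝ} (hV : ∀ ω, Tendsto (fun n => W n ω) atTop (nhds (V ω)))
    (hVm : Measurable[m] V) (hV0 : ∀ ω, 0 ≤ V ω)
    {g : Ω → ℝ≥0∞} (hg : Measurable[m] g) :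
    ∫⁻ ω, ENNReal.ofReal (Z ω) * g ω ∂P = ∫⁻ ω, ENNReal.ofReal (V ω) * g ω ∂P := by
  haveI : ∀ n, SigmaFinite (P.trim (hmseq n)) := fun n => by
    haveI : IsFiniteMeasure (P.trim (hmseq n)) := isFiniteMeasure_trim (hmseq n)
    infer_instance
  have hVm0 : Measurable[m0] V := hVm.mono hm le_rfl
  -- pointwise: ofReal (V ω) = liminf ofReal (W n ω)
  have hVof : ∀ ω, ENNReal.ofReal (V ω) = Filter.liminf (fun n => ENNReal.ofReal (W n ω)) atTop :=
    fun ω => ((ENNReal.continuous_ofReal.tendsto _).comp (hV ω)).liminf_eq.symm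
  -- set integrals of W n equal those of Z
  have hWset : ∀ n, ∀ s : Set Ω, MeasurableSet[m] s →
      ∫⁻ ω in s, ENNReal.ofReal (W n ω) ∂P = ∫⁻ ω in s, ENNReal.ofReal (Z ω) ∂P := by
    intro n s hs
    have hsn : MeasurableSet[mseq n] s := hmm n s hs
    have h1 : ∫ ω in s, W n ω ∂P = ∫ ω in s, Z ω ∂P :=
      (integral_congr_ae (ae_restrict_of_ae (hW n))).trans
        (setIntegral_condExp (hmseq n) hZint hsn)
    have h2 : ∫⁻ ω in s, ENNReal.ofReal (W n ω) ∂P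
        = ENNReal.ofReal (∫ ω in s, W n ω ∂P) :=
      (ofReal_integral_eq_lintegral_ofReal
        (((integrable_condExp (m := mseq n)).congr (hW n).symm).restrict)
        (Filter.Eventually.of_forall fun ω => hW0 n ω)).symm
    have h3 : ∫⁻ ω in s, ENNReal.ofReal (Z ω) ∂P
        = ENNReal.ofReal (∫ ω in s, Z ω ∂P) :=
      (ofReal_integral_eq_lintegral_ofReal hZint.restrict
        (Filter.Eventually.of_forall fun ω => hZ0 ω)).symm
    rw [h2, h3, h1]
  -- Fatou direction on any m-measurable set
  have hle : ∀ s : Set Ω, MeasurableSet[m] s →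
      ∫⁻ ω in s, ENNReal.ofReal (V ω) ∂P ≤ ∫⁻ ω in s, ENNReal.ofReal (Z ω) ∂P := by
    intro s hs
    have : ∫⁻ ω in s, ENNReal.ofReal (V ω) ∂P
        = ∫⁻ ω in s, Filter.liminf (fun n => ENNReal.ofReal (W n ω)) atTop ∂P :=
      lintegral_congr fun ω => by rw [hVof ω]
    rw [this]
    refine le_trans (lintegral_liminf_le fun n => (hWm n).ennreal_ofReal) ?_
    have : ∀ n, ∫⁻ ω in s, ENNReal.ofReal (W n ω) ∂P = ∫⁻ ω in s, ENNReal.ofReal (Z ω) ∂P :=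
      fun n => hWset n s hs
    simp only [this]
    exact liminf_const _ |>.le
  -- total mass: ∫ V = ∫ Z
  have htot : ∫⁻ ω, ENNReal.ofReal (V ω) ∂P = ∫⁻ ω, ENNReal.ofReal (Z ω) ∂P := by
    refine le_antisymm ?_ ?_
    · simpa using hle univ MeasurableSet.univ
    · -- reverse inequality via truncation
      have hK : ∀ K : ℕ, ∫⁻ ω, ENNReal.ofReal (min (Z ω) K) ∂P
          ≤ ∫⁻ ω, ENNReal.ofReal (V ω) ∂P := by
        intro K
        set U : ℕ → Ω → ℝ := fun n => P[fun ω => min (Z ω) K | mseq n] with hU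
        have hminint : Integrable (fun ω => min (Z ω) K) P := by
          refine Integrable.mono' (integrable_const (K : ℝ)) ?_ ?_
          · exact (hZm.min measurable_const).aestronglyMeasurable
          · refine Filter.Eventually.of_forall fun ω => ?_
            rw [Real.norm_eq_abs, abs_of_nonneg (le_min (hZ0 ω) (Nat.cast_nonneg K))]
            exact min_le_right _ _
        have hUK : ∀ n, U n ≤ᵐ[P] fun _ => (K : ℝ) := by
          intro n
          refine (condExp_mono (μ := P) (m := mseq n) hminint (integrable_const _)
            (Filter.Eventually.of_forall fun ω => min_le_right _ _)).trans ?_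
          rw [condExp_const (hmseq n)]
        have hWU : ∀ n, U n ≤ᵐ[P] W n := by
          intro n
          refine (condExp_mono (μ := P) (m := mseq n) hminint hZint
            (Filter.Eventually.of_forall fun ω => min_le_left _ _)).trans ?_
          exact (hW n).symm.le
        -- a.e. ω : limsup ofReal (U n ω) ≤ ofReal (V ω)
        have hVU : ∀ᵐ ω ∂P,
            Filter.limsup (fun n => ENNReal.ofReal (U n ω)) atTop ≤ ENNReal.ofReal (V ω) := by
          have := ae_all_iff.mpr hWU
          filter_upwards [this] with ω hω
          have h1 : Filter.limsup (fun n => ENNReal.ofReal (U n ω)) atTop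
              ≤ Filter.limsup (fun n => ENNReal.ofReal (W n ω)) atTop :=
            Filter.limsup_le_limsup (Filter.Eventually.of_forall fun n =>
              ENNReal.ofReal_le_ofReal (hω n))
          have h2 : Filter.limsup (fun n => ENNReal.ofReal (W n ω)) atTop
              = ENNReal.ofReal (V ω) :=
            ((ENNReal.continuous_ofReal.tendsto _).comp (hV ω)).limsup_eq
          exact h1.trans h2.le
        have hrev : Filter.limsup (fun n => ∫⁻ ω, ENNReal.ofReal (U n ω) ∂P) atTop
            ≤ ∫⁻ ω, Filter.limsup (fun n => ENNReal.ofReal (U n ω)) atTop ∂P := by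
          refine @limsup_lintegral_le Ω m0 P _ (fun _ => ENNReal.ofReal K)
            (fun n => (stronglyMeasurable_condExp.mono (hmseq n)).measurable.ennreal_ofReal)
            (fun n => (hUK n).mono fun ω h => ENNReal.ofReal_le_ofReal h) ?_
          simp [lintegral_const]
        have hUeq : ∀ n, ∫⁻ ω, ENNReal.ofReal (U n ω) ∂P
            = ∫⁻ ω, ENNReal.ofReal (min (Z ω) K) ∂P := by
          intro n
          have h1 : ∫ ω, U n ω ∂P = ∫ ω, min (Z ω) K ∂P := integral_condExp (hmseq n)
          have h2 : ∫⁻ ω, ENNReal.ofReal (U n ω) ∂P = ENNReal.ofReal (∫ ω, U n ω ∂P) :=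
            (ofReal_integral_eq_lintegral_ofReal integrable_condExp
              (condExp_nonneg (Filter.Eventually.of_forall fun ω =>
                le_min (hZ0 ω) (Nat.cast_nonneg K)))).symm
          have h3 : ∫⁻ ω, ENNReal.ofReal (min (Z ω) K) ∂P
              = ENNReal.ofReal (∫ ω, min (Z ω) K ∂P) :=
            (ofReal_integral_eq_lintegral_ofReal hminint
              (Filter.Eventually.of_forall fun ω => le_min (hZ0 ω) (Nat.cast_nonneg K))).symm
          rw [h2, h3, h1]
        calc ∫⁻ ω, ENNReal.ofReal (min (Z ω) K) ∂P
            = Filter.limsup (fun n => ∫⁻ ω, ENNReal.ofReal (U n ω) ∂P) atTop := by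
              simp only [hUeq]; exact (limsup_const _).symm
          _ ≤ ∫⁻ ω, Filter.limsup (fun n => ENNReal.ofReal (U n ω)) atTop ∂P := hrev
          _ ≤ ∫⁻ ω, ENNReal.ofReal (V ω) ∂P := lintegral_mono_ae hVU
      -- sup over K
      have hsup : ∫⁻ ω, ENNReal.ofReal (Z ω) ∂P
          = ⨆ K : ℕ, ∫⁻ ω, ENNReal.ofReal (min (Z ω) K) ∂P := by
        rw [← lintegral_iSup]
        · refine lintegral_congr fun ω => ?_
          refine le_antisymm (le_iSup_iff.mpr fun b hb => ?_) (iSup_le fun K =>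
            ENNReal.ofReal_le_ofReal (min_le_left _ _))
          refine le_trans (le_of_eq ?_) (hb ⌈Z ω⌉₊)
          rw [min_eq_left (Nat.le_ceil _)]
        · exact fun K => (hZm.min measurable_const).ennreal_ofReal
        · intro K K' hKK' ω
          exact ENNReal.ofReal_le_ofReal (min_le_min le_rfl (Nat.cast_le.mpr hKK'))
      rw [hsup]
      exact iSup_le hK
  have hfin : ∫⁻ ω, ENNReal.ofReal (Z ω) ∂P ≠ ∞ := by
    rw [← ofReal_integral_eq_lintegral_ofReal hZint
      (Filter.Eventually.of_forall fun ω => hZ0 ω)]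
    exact ENNReal.ofReal_ne_top
  -- equality on all m-measurable sets
  have heq : ∀ s : Set Ω, MeasurableSet[m] s →
      ∫⁻ ω in s, ENNReal.ofReal (V ω) ∂P = ∫⁻ ω in s, ENNReal.ofReal (Z ω) ∂P := by
    intro s hs
    have h1 := hle s hs
    have h2 := hle sᶜ (hs.compl)
    have hadd : ∫⁻ ω in s, ENNReal.ofReal (V ω) ∂P + ∫⁻ ω in sᶜ, ENNReal.ofReal (V ω) ∂P
        = ∫⁻ ω in s, ENNReal.ofReal (Z ω) ∂P + ∫⁻ ω in sᶜ, ENNReal.ofReal (Z ω) ∂P := by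
      rw [lintegral_add_compl _ (hm s hs), lintegral_add_compl _ (hm s hs)]
      exact htot
    refine le_antisymm h1 ?_
    have hZc : ∫⁻ ω in sᶜ, ENNReal.ofReal (Z ω) ∂P ≠ ∞ := by
      refine ne_top_of_le_ne_top hfin ?_
      exact lintegral_mono' Measure.restrict_le_self le_rfl
    have h3 : ∫⁻ ω in s, ENNReal.ofReal (Z ω) ∂P + ∫⁻ ω in sᶜ, ENNReal.ofReal (Z ω) ∂P
        ≤ ∫⁻ ω in s, ENNReal.ofReal (V ω) ∂P + ∫⁻ ω in sᶜ, ENNReal.ofReal (Z ω) ∂P := by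
      rw [← hadd]
      exact add_le_add le_rfl h2
    exact (ENNReal.add_le_add_iff_right hZc).mp h3
  -- upgrade to all m-measurable g via trim
  have hμeq : (P.withDensity fun ω => ENNReal.ofReal (Z ω)).trim hm
      = (P.withDensity fun ω => ENNReal.ofReal (V ω)).trim hm := by
    refine Measure.ext fun s hs => ?_
    rw [trim_measurableSet_eq hm hs, trim_measurableSet_eq hm hs,
      withDensity_apply _ (hm s hs), withDensity_apply _ (hm s hs)]
    exact (heq s hs).symm
  calc ∫⁻ ω, ENNReal.ofReal (Z ω) * g ω ∂P
      = ∫⁻ ω, g ω ∂(P.withDensity fun ω => ENNReal.ofReal (Z ω)) := by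
        rw [lintegral_withDensity_eq_lintegral_mul_non_measurable _ hZm.ennreal_ofReal
          (Filter.Eventually.of_forall fun ω => ENNReal.ofReal_lt_top)]
        rfl
    _ = ∫⁻ ω, g ω ∂((P.withDensity fun ω => ENNReal.ofReal (Z ω)).trim hm) :=
        (lintegral_trim hm hg).symm
    _ = ∫⁻ ω, g ω ∂((P.withDensity fun ω => ENNReal.ofReal (V ω)).trim hm) := by rw [hμeq]
    _ = ∫⁻ ω, g ω ∂(P.withDensity fun ω => ENNReal.ofReal (V ω)) := lintegral_trim hm hg
    _ = ∫⁻ ω, ENNReal.ofReal (V ω) * g ω ∂P := by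
        rw [lintegral_withDensity_eq_lintegral_mul_non_measurable _ hVm0.ennreal_ofReal
          (Filter.Eventually.of_forall fun ω => ENNReal.ofReal_lt_top)]
        rfl

end LemA


section LemB

variable {Ω : Type*} {m0 : MeasurableSpace Ω} {P : Measure Ω} [IsProbabilityMeasure P]
  {ℱ : Filtration ℝ m0}

/-- Optional sampling at a countable-range stopping time with values in `[0, T]`, for the
càdlàg version `Y` of the density martingale of `Z`. -/
theorem stoppedValue_ae_eq_condexp_countable
    {Z : Ω → ℝ} (hZint : Integrable Z P) {T : ℝ}
    {Y : ℝ → Ω → ℝ} (hY_mart : ∀ t ∈ Icc (0 : ℝ) T, Y t =ᵐ[P] P[Z | ℱ t])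
    {η : Ω → ℝ} (hη : IsStoppingTime ℱ (fun ω => (η ω : WithTop ℝ))) (hrange : (Set.range η).Countable)
    (hmem : ∀ ω, η ω ∈ Icc (0 : ℝ) T) :
    (fun ω => Y (η ω) ω) =ᵐ[P] P[Z | hη.measurableSpace] := by
  haveI : SigmaFinite (P.trim hη.measurableSpace_le) := by
    haveI := isFiniteMeasure_trim (μ := P) hη.measurableSpace_le
    infer_instance
  have huniv : (univ : Set Ω) = ⋃ i ∈ Set.range η, {ω | η ω = i} := by
    ext1 ω
    simp only [Set.mem_univ, Set.mem_range, Set.iUnion_exists, Set.iUnion_iUnion_eq',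
      Set.mem_iUnion, Set.mem_setOf_eq, exists_apply_eq_apply']
  suffices h : ∀ i ∈ Set.range η,
      (fun ω => Y (η ω) ω) =ᵐ[P.restrict {ω | η ω = i}] P[Z | hη.measurableSpace] by
    have h2 := (ae_eq_restrict_biUnion_iff (fun i => {ω | η ω = i}) hrange _ _).mpr h
    rwa [← huniv, Measure.restrict_univ] at h2
  intro i hi
  have h0 : i ∈ Icc (0 : ℝ) T := by
    obtain ⟨ω, rfl⟩ := hi
    exact hmem ω
  haveI : SigmaFinite (P.trim (ℱ.le i)) := by
    haveI := isFiniteMeasure_trim (μ := P) (ℱ.le i)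
    infer_instance
  have h1 : P[Z | hη.measurableSpace] =ᵐ[P.restrict {ω | η ω = i}] P[Z | ℱ i] :=
    condExp_ae_eq_restrict_of_measurableSpace_eq_on hη.measurableSpace_le (ℱ.le i)
      (by simpa only [WithTop.coe_eq_coe] using hη.measurableSet_eq' i) fun t => by
        have hc : {ω | η ω = i} = {ω | (η ω : WithTop ℝ) = (i : WithTop ℝ)} := by
          ext ω; simp
        rw [Set.inter_comm _ t, hc, IsStoppingTime.measurableSet_inter_eq_iff]
  have h2 : Y i =ᵐ[P] P[Z | ℱ i] := hY_mart i h0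
  have h3 : (fun ω => Y (η ω) ω) =ᵐ[P.restrict {ω | η ω = i}] Y i := by
    rw [Filter.EventuallyEq, ae_restrict_iff' (show MeasurableSet {ω | η ω = i} by
      simpa only [WithTop.coe_eq_coe] using ℱ.le i _ (hη.measurableSet_eq i))]
    exact Filter.Eventually.of_forall fun ω hω => by rw [Set.mem_setOf_eq] at hω; rw [hω]
  exact h3.trans (h2.restrict.trans h1.symm)

end LemB

section Prog

variable {Ω : Type*} {m0 : MeasurableSpace Ω}

/-- A right-continuous adapted real-valued process is progressively measurable. -/
theorem progMeasurable_of_rightContinuous (ℱ : Filtration ℝ m0) {β : Type*}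
    [TopologicalSpace β] [TopologicalSpace.PseudoMetrizableSpace β] [SecondCountableTopology β]
    [MeasurableSpace β] [BorelSpace β]
    {Y : ℝ → Ω → β} (hadp : Adapted ℱ Y)
    (hrc : ∀ ω t, ContinuousWithinAt (fun s => Y s ω) (Ici t) t) :
    ProgMeasurable ℱ Y := by
  intro i
  letI mI : MeasurableSpace (Iic i) := Subtype.instMeasurableSpace
  letI mprod : MeasurableSpace (Iic i × Ω) := mI.prod (ℱ i)
  -- dyadic approximations from the right
  set appr : ℕ → ℝ → ℝ := fun n x => min (⌈x * 2 ^ n⌉ / 2 ^ n) i with happr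
  have happle : ∀ n x, x ≤ i → x ≤ appr n x ∧ appr n x ≤ x + ((2 : ℝ) ^ n)⁻¹ := by
    intro n x hx
    have h2n : (0 : ℝ) < 2 ^ n := by positivity
    constructor
    · refine le_min ?_ hx
      rw [le_div_iff₀ h2n]
      exact Int.le_ceil _
    · refine le_trans (min_le_left _ _) ?_
      rw [div_le_iff₀ h2n]
      have := (Int.ceil_lt_add_one (x * 2 ^ n)).le
      calc (⌈x * 2 ^ n⌉ : ℝ) ≤ x * 2 ^ n + 1 := this
        _ = (x + (2 ^ n)⁻¹) * 2 ^ n := by field_simp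
  have hmeas : ∀ n, Measurable[mprod] fun p : Iic i × Ω => Y (appr n (p.1 : ℝ)) p.2 := by
    intro n
    -- countable range of the time index
    have hcr : (Set.range fun x : ℝ => appr n x).Countable := by
      have : (Set.range fun x : ℝ => appr n x) ⊆
          (fun k : ℤ => min ((k : ℝ) / 2 ^ n) i) '' univ := by
        rintro r ⟨x, rfl⟩
        exact ⟨⌈x * 2 ^ n⌉, mem_univ _, rfl⟩
      exact (countable_univ.image _).mono this
    haveI : Countable (Set.range fun x : ℝ => appr n x) := hcr.to_subtype
    set D := Set.range fun x : ℝ => appr n x with hD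
    have hap_meas : Measurable (appr n) := by
      apply Measurable.min ?_ measurable_const
      have h1 : Measurable fun x : ℝ => (⌈x * 2 ^ n⌉ : ℝ) := by
        have : Measurable fun x : ℝ => ⌈x * 2 ^ n⌉ :=
          Int.measurable_ceil.comp (measurable_id.mul_const _)
        exact Measurable.comp (f := fun x : ℝ => ⌈x * 2 ^ n⌉)
          (Measurable.of_discrete (f := fun k : ℤ => (k : ℝ))) this
      exact h1.div_const _
    set e : Iic i × Ω → Ω × D := fun p => (p.2, ⟨appr n p.1, ⟨p.1, rfl⟩⟩) with he
    have hemeas : @Measurable _ _ mprod (MeasurableSpace.prod (ℱ i) inferInstance) e := by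
      refine Measurable.prodMk (@measurable_snd _ _ mI (ℱ i)) ?_
      refine @measurable_to_countable' _ _ _ _ mprod _ fun d => ?_
      have : (fun p : Iic i × Ω => (⟨appr n p.1, ⟨p.1, rfl⟩⟩ : D)) ⁻¹' {d}
          = (fun p : Iic i × Ω => appr n (p.1 : ℝ)) ⁻¹' {(d : ℝ)} := by
        ext p
        simp [Subtype.ext_iff]
      rw [this]
      exact (hap_meas.comp ((@measurable_fst _ _ mI (ℱ i)).subtype_val))
        (measurableSet_singleton _)
    have hfmeas : @Measurable _ _ (MeasurableSpace.prod (ℱ i) inferInstance) _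
        fun q : Ω × D => Y ((q.2 : ℝ)) q.1 := by
      refine measurable_from_prod_countable_left fun d => ?_
      have hdi : (d : ℝ) ≤ i := by
        obtain ⟨x, hx⟩ := d.2
        rw [← hx]
        exact min_le_right _ _
      exact ((hadp (d : ℝ)).mono (ℱ.mono hdi) le_rfl)
    exact hfmeas.comp hemeas
  have htend : ∀ p : Iic i × Ω,
      Tendsto (fun n => Y (appr n (p.1 : ℝ)) p.2) atTop (nhds (Y (p.1 : ℝ) p.2)) := by
    intro p
    have h1 : Tendsto (fun n => appr n (p.1 : ℝ)) atTop (nhds (p.1 : ℝ)) := by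
      have hsq : ∀ n, (p.1 : ℝ) ≤ appr n (p.1 : ℝ) ∧ appr n (p.1 : ℝ) ≤ (p.1 : ℝ) + (2 ^ n)⁻¹ :=
        fun n => happle n _ p.1.2
      refine tendsto_of_tendsto_of_tendsto_of_le_of_le tendsto_const_nhds ?_
        (fun n => (hsq n).1) fun n => (hsq n).2
      have : Tendsto (fun n : ℕ => ((2 : ℝ) ^ n)⁻¹) atTop (nhds 0) := by
        simp_rw [← inv_pow]
        exact tendsto_pow_atTop_nhds_zero_of_lt_one (by norm_num) (by norm_num)
      simpa using tendsto_const_nhds.add this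
    have h2 : Tendsto (fun n => appr n (p.1 : ℝ)) atTop (nhdsWithin (p.1 : ℝ) (Ici (p.1 : ℝ))) := by
      refine tendsto_nhdsWithin_of_tendsto_nhds_of_eventually_within _ h1 ?_
      exact Filter.Eventually.of_forall fun n => (happle n _ p.1.2).1
    exact ((hrc p.2 (p.1 : ℝ)).tendsto.comp h2)
  exact stronglyMeasurable_of_tendsto _
    (fun n => ((hmeas n).stronglyMeasurable)) (tendsto_pi_nhds.mpr htend)

end Prog


section Stop

variable {Ω : Type*} {m0 : MeasurableSpace Ω} {ℱ : Filtration ℝ m0}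
  {κ : ℝ → Ω → ℝ} {T : ℝ}

/-- `σ_s = min (τ_s, T)` is a stopping time when the filtration is right-continuous on `[0,T)`. -/
theorem isStoppingTime_sigma (hT : 0 < T)
    (h_right : ∀ t ∈ Set.Ico (0 : ℝ) T, ℱ t = ⨅ u : {u : ℝ // t < u}, ℱ (u : ℝ))
    (hadp : Adapted ℱ κ) (hmono : ∀ ω, Monotone fun t => κ t ω)
    (hκ0 : ∀ ω, κ 0 ω = 0) (s : ℝ) :
    IsStoppingTime ℱ fun ω => ((min (tau (fun t => κ t ω) (T + 1) s) T : ℝ) : WithTop ℝ) := by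
  have hT₁ : (0 : ℝ) < T + 1 := by linarith
  intro t
  simp only [WithTop.coe_le_coe]
  rcases le_or_gt T t with hTt | htT
  · have : {ω | min (tau (fun u => κ u ω) (T + 1) s) T ≤ t} = univ :=
      eq_univ_of_forall fun ω => le_trans (min_le_right _ _) hTt
    rw [this]
    exact MeasurableSet.univ
  have hset : {ω | min (tau (fun u => κ u ω) (T + 1) s) T ≤ t}
      = {ω | tau (fun u => κ u ω) (T + 1) s ≤ t} := by
    ext ω
    simp only [mem_setOf_eq, min_le_iff]
    exact ⟨fun h => h.resolve_right fun h' => absurd htT (not_lt.mpr h'),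
      fun h => Or.inl h⟩
  rw [hset]
  rcases lt_or_ge t 0 with ht0 | ht0
  · have : {ω | tau (fun u => κ u ω) (T + 1) s ≤ t} = ∅ := by
      refine eq_empty_of_forall_notMem fun ω hω => ?_
      exact absurd (le_trans (tau_nonneg hT₁) hω) (not_le.mpr ht0)
    rw [this]
    exact @MeasurableSet.empty _ (ℱ t)
  -- characterization by rationals in `(t, v)` for any `v ∈ (t, T+1]`
  have hchar : ∀ v, t < v → v ≤ T + 1 →
      {ω | tau (fun u => κ u ω) (T + 1) s ≤ t}
        = ⋂ q : {q : ℚ // t < (q : ℝ) ∧ (q : ℝ) < v}, {ω | s < κ (q : ℝ) ω} := by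
    intro v htv hv
    ext ω
    simp only [mem_setOf_eq, mem_iInter]
    constructor
    · intro h q
      exact lt_of_tau_le (hmono ω) hT₁ h q.2.1 (le_trans q.2.2.le hv)
    · intro h
      by_contra hc
      push_neg at hc
      obtain ⟨q, hq1, hq2⟩ := exists_rat_btwn (lt_min htv hc)
      have hq0 : (0 : ℝ) < (q : ℝ) := lt_of_le_of_lt ht0 hq1
      have h1 : tau (fun u => κ u ω) (T + 1) s ≤ (q : ℝ) :=
        tau_le_of_lt hT₁ hq0 (h ⟨q, hq1, lt_of_lt_of_le hq2 (min_le_left _ _)⟩)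
      exact absurd h1 (not_le.mpr (lt_of_lt_of_le hq2 (min_le_right v _)))
  rw [h_right t ⟨ht0, htT⟩]
  refine MeasurableSpace.measurableSet_iInf.mpr fun u => ?_
  rw [hchar (min (T + 1) (u : ℝ)) (lt_min (by linarith) u.2) (min_le_left _ _)]
  refine MeasurableSet.iInter fun q => ?_
  have hq : (q : ℝ) ≤ (u : ℝ) := (lt_of_lt_of_le q.2.2 (min_le_right _ _)).le
  exact ℱ.mono hq _ ((hadp (q : ℝ)) measurableSet_Ioi)

/-- Dyadic upper approximation of a `[0,T]`-valued stopping time is a stopping time. -/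
theorem isStoppingTime_dyadic {σ : Ω → ℝ} (hσ : IsStoppingTime ℱ (fun ω => (σ ω : WithTop ℝ)))
    (hT : 0 < T) (hmem : ∀ ω, σ ω ∈ Icc (0 : ℝ) T) (n : ℕ) :
    IsStoppingTime ℱ fun ω => ((min ((⌈σ ω * 2 ^ n⌉ : ℝ) / 2 ^ n) T : ℝ) : WithTop ℝ) := by
  intro t
  simp only [WithTop.coe_le_coe]
  have h2n : (0 : ℝ) < 2 ^ n := by positivity
  rcases le_or_gt T t with hTt | htT
  · have : {ω | min ((⌈σ ω * 2 ^ n⌉ : ℝ) / 2 ^ n) T ≤ t} = univ :=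
      eq_univ_of_forall fun ω => le_trans (min_le_right _ _) hTt
    rw [this]
    exact MeasurableSet.univ
  · have hset : {ω | min ((⌈σ ω * 2 ^ n⌉ : ℝ) / 2 ^ n) T ≤ t}
        = {ω | σ ω ≤ (⌊t * 2 ^ n⌋ : ℝ) / 2 ^ n} := by
      ext ω
      simp only [mem_setOf_eq, min_le_iff]
      constructor
      · rintro (h | h)
        · rw [div_le_iff₀ h2n] at h
          rw [le_div_iff₀ h2n]
          exact_mod_cast Int.ceil_le.mp (by exact_mod_cast Int.le_floor.mpr h)
        · exact absurd htT (not_lt.mpr h)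
      · intro h
        left
        rw [le_div_iff₀ h2n] at h
        rw [div_le_iff₀ h2n]
        have h1 : ⌈σ ω * 2 ^ n⌉ ≤ ⌊t * 2 ^ n⌋ := Int.ceil_le.mpr h
        calc (⌈σ ω * 2 ^ n⌉ : ℝ) ≤ (⌊t * 2 ^ n⌋ : ℝ) := by exact_mod_cast h1
          _ ≤ t * 2 ^ n := Int.floor_le _
    rw [hset]
    have hr : (⌊t * 2 ^ n⌋ : ℝ) / 2 ^ n ≤ t := by
      rw [div_le_iff₀ h2n]
      exact Int.floor_le _
    exact ℱ.mono hr _ (by simpa only [WithTop.coe_le_coe] using hσ ((⌊t * 2 ^ n⌋ : ℝ) / 2 ^ n))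

/-- The event `{s < κ_T}` is measurable w.r.t. the σ-algebra of the stopping time
`min (τ_s) T`. -/
theorem measurableSet_lt_kappaT (hT : 0 < T)
    (hadp : Adapted ℱ κ) (hmono : ∀ ω, Monotone fun t => κ t ω)
    {s : ℝ} (hs : 0 ≤ s)
    (hσ : IsStoppingTime ℱ fun ω => ((min (tau (fun t => κ t ω) (T + 1) s) T : ℝ) : WithTop ℝ)) :
    MeasurableSet[hσ.measurableSpace] {ω | s < κ T ω} := by
  have hT₁ : (0 : ℝ) < T + 1 := by linarith
  refine ⟨le_iSup ℱ T _ ((hadp T) measurableSet_Ioi), fun t => ?_⟩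
  simp only [WithTop.coe_le_coe]
  rcases le_or_gt T t with hTt | htT
  · have h1 : {ω | s < κ T ω} ∩ {ω | min (tau (fun u => κ u ω) (T + 1) s) T ≤ t}
        = {ω | s < κ T ω} := by
      refine inter_eq_left.mpr fun ω _ => ?_
      exact le_trans (min_le_right _ _) hTt
    rw [h1]
    exact ℱ.mono hTt _ ((hadp T) measurableSet_Ioi)
  · have h1 : {ω | s < κ T ω} ∩ {ω | min (tau (fun u => κ u ω) (T + 1) s) T ≤ t}
        = {ω | min (tau (fun u => κ u ω) (T + 1) s) T ≤ t} := by
      refine inter_eq_right.mpr fun ω hω => ?_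
      simp only [mem_setOf_eq, min_le_iff] at hω
      have hτ : tau (fun u => κ u ω) (T + 1) s ≤ t :=
        hω.resolve_right fun h' => absurd htT (not_lt.mpr h')
      exact lt_of_tau_le (hmono ω) hT₁ hτ htT (by linarith)
    rw [h1]
    simpa only [WithTop.coe_le_coe] using hσ t

end Stop

end LSDM



open LSDM

/-- Proposition 3.2 of the paper: if `Q ≪ P` has density `Z`, `Y` is the càdlàg version of the
density martingale `Y_t = E[Z | ℱ_t]`, and `κ` is an adapted, nondecreasing, right-continuous
process started at `0`, then for every nonnegative progressively measurable process `c`,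
`∫_Ω (∫_{(0,T]} c_t dκ_t) dQ = ∫_Ω (∫_{(0,T]} c_t Y_t dκ_t) dP`, the inner integrals being
taken with respect to the Lebesgue–Stieltjes measures of the paths `t ↦ κ_t(ω)`. -/
theorem lintegral_stieltjes_density_martingale
    {Ω : Type*} {m0 : MeasurableSpace Ω} (P : Measure Ω) [IsProbabilityMeasure P]
    (T : ℝ) (hT : 0 < T)
    (ℱ : Filtration ℝ m0)
    -- usual conditions: right-continuity of the filtration and completeness
    (h_right : ∀ t ∈ Set.Ico (0 : ℝ) T, ℱ t = ⨅ s : {s : ℝ // t < s}, ℱ (s : ℝ))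
    (h_complete : ∀ N : Set Ω, P N = 0 → MeasurableSet[ℱ 0] N)
    -- the absolutely continuous measure `Q` with density `Z = dQ/dP`
    (Q : Measure Ω) [IsFiniteMeasure Q]
    (Z : Ω → ℝ) (hZ_meas : Measurable Z) (hZ_nonneg : ∀ ω, 0 ≤ Z ω)
    (hQ : Q = P.withDensity fun ω => ENNReal.ofReal (Z ω))
    -- the càdlàg version `Y` of the density martingale
    (Y : ℝ → Ω → ℝ) (hY_adapted : Adapted ℱ Y)
    (hY_nonneg : ∀ t ω, 0 ≤ Y t ω)
    (hY_rc : ∀ ω t, ContinuousWithinAt (fun s => Y s ω) (Set.Ici t) t)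
    (hY_ll : ∀ ω t, ∃ l : ℝ, Tendsto (fun s => Y s ω) (nhdsWithin t (Set.Iio t)) (nhds l))
    (hY_mart : ∀ t ∈ Set.Icc (0 : ℝ) T, Y t =ᵐ[P] P[Z | ℱ t])
    -- the clock `κ`: adapted, paths nondecreasing, right-continuous and starting at `0`
    (κ : ℝ → Ω → ℝ) (hκ_adapted : Adapted ℱ κ)
    (hκ_mono : ∀ ω, Monotone fun t => κ t ω)
    (hκ_rc : ∀ ω t, ContinuousWithinAt (fun s => κ s ω) (Set.Ici t) t)
    (hκ_zero : ∀ ω, κ 0 ω = 0)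
    -- a nonnegative progressively measurable process `c`
    (c : ℝ → Ω → ENNReal) (hc : ProgMeasurable ℱ c) :
    ∫⁻ ω, (∫⁻ t in Set.Ioc (0 : ℝ) T, c t ω
        ∂((⟨fun t => κ t ω, hκ_mono ω, hκ_rc ω⟩ : StieltjesFunction ℝ).measure)) ∂Q
      = ∫⁻ ω, (∫⁻ t in Set.Ioc (0 : ℝ) T, c t ω * ENNReal.ofReal (Y t ω)
        ∂((⟨fun t => κ t ω, hκ_mono ω, hκ_rc ω⟩ : StieltjesFunction ℝ).measure)) ∂P := by
  have hT₁ : (0 : ℝ) < T + 1 := by linarith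
  -- integrability of Z
  have hZlint : ∫⁻ ω, ENNReal.ofReal (Z ω) ∂P ≠ ∞ := by
    have h := measure_ne_top Q univ
    rw [hQ, withDensity_apply _ MeasurableSet.univ, Measure.restrict_univ] at h
    exact h
  have hZint : Integrable Z P := by
    refine ⟨hZ_meas.aestronglyMeasurable, ?_⟩
    rw [hasFiniteIntegral_iff_ofReal (Filter.Eventually.of_forall hZ_nonneg)]
    exact lt_top_iff_ne_top.mpr hZlint
  -- progressive measurability of Y
  have hYprog : ProgMeasurable ℱ Y :=
    progMeasurable_of_rightContinuous ℱ hY_adapted hY_rc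
  -- time-change inverse
  set τ : ℝ → Ω → ℝ := fun s ω => tau (fun t => κ t ω) (T + 1) s with hτdef
  set σ : ℝ → Ω → ℝ := fun s ω => min (τ s ω) T with hσdef
  have hκqm : ∀ q : ℝ, Measurable (κ q) :=
    fun q => ((hκ_adapted q).mono (ℱ.le q) le_rfl)
  have hτm : Measurable fun p : ℝ × Ω => τ p.1 p.2 :=
    measurable_tau_prod (fun q _ => hκqm q) hκ_mono hκ_zero hT₁
  have hσm : Measurable fun p : ℝ × Ω => σ p.1 p.2 := hτm.min measurable_const
  have hσleT : ∀ s ω, σ s ω ≤ T := fun s ω => min_le_right _ _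
  have hσ : ∀ s : ℝ, IsStoppingTime ℱ (fun ω => (σ s ω : WithTop ℝ)) :=
    fun s => isStoppingTime_sigma hT h_right hκ_adapted hκ_mono hκ_zero s
  have hσ0 : ∀ s ω, 0 ≤ s → 0 ≤ σ s ω :=
    fun s ω hs => le_min (tau_nonneg hT₁) hT.le
  -- product-measurability of `c` and `Y` up to time T
  have hprodle : (Subtype.instMeasurableSpace : MeasurableSpace (Set.Iic T)).prod (ℱ T)
      ≤ Subtype.instMeasurableSpace.prod m0 :=
    sup_le_sup le_rfl (MeasurableSpace.comap_mono (ℱ.le T))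
  have hcT : Measurable[(Subtype.instMeasurableSpace :
      MeasurableSpace (Set.Iic T)).prod m0] fun p : Set.Iic T × Ω => c p.1 p.2 :=
    (hc T).measurable.mono hprodle le_rfl
  have hYT : Measurable[(Subtype.instMeasurableSpace :
      MeasurableSpace (Set.Iic T)).prod m0] fun p : Set.Iic T × Ω => Y p.1 p.2 :=
    (hYprog T).measurable.mono hprodle le_rfl
  -- the auxiliary process `g`
  set g : ℝ → Ω → ℝ≥0∞ := fun s ω => if s < κ T ω then c (σ s ω) ω else 0 with hgdef
  have hcσm : Measurable fun p : ℝ × Ω => c (σ p.1 p.2) p.2 := by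
    have hemb : Measurable fun p : ℝ × Ω => ((⟨σ p.1 p.2, hσleT p.1 p.2⟩ : Set.Iic T), p.2) :=
      (hσm.subtype_mk).prodMk measurable_snd
    exact hcT.comp hemb
  have hYσm : Measurable fun p : ℝ × Ω => Y (σ p.1 p.2) p.2 := by
    have hemb : Measurable fun p : ℝ × Ω => ((⟨σ p.1 p.2, hσleT p.1 p.2⟩ : Set.Iic T), p.2) :=
      (hσm.subtype_mk).prodMk measurable_snd
    exact hYT.comp hemb
  have hsetκ : MeasurableSet {p : ℝ × Ω | p.1 < κ T p.2} :=
    measurableSet_lt measurable_fst ((hκqm T).comp measurable_snd)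
  have hgm : Measurable fun p : ℝ × Ω => g p.1 p.2 :=
    Measurable.ite hsetκ hcσm measurable_const
  have hZgm : Measurable fun p : ℝ × Ω => ENNReal.ofReal (Z p.2) * g p.1 p.2 :=
    ((hZ_meas.comp measurable_snd).ennreal_ofReal).mul hgm
  have hYgm : Measurable fun p : ℝ × Ω => ENNReal.ofReal (Y (σ p.1 p.2) p.2) * g p.1 p.2 :=
    (hYσm.ennreal_ofReal).mul hgm
  -- per-ω sections
  have hcsec : ∀ ω, Measurable fun t : ℝ => c (min t T) ω := by
    intro ω
    have hemb : Measurable fun t : ℝ => ((⟨min t T, min_le_right t T⟩ : Set.Iic T), ω) :=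
      ((measurable_id.min measurable_const).subtype_mk).prodMk measurable_const
    exact hcT.comp hemb
  have hYsec : ∀ ω, Measurable fun t : ℝ => Y (min t T) ω := by
    intro ω
    have hemb : Measurable fun t : ℝ => ((⟨min t T, min_le_right t T⟩ : Set.Iic T), ω) :=
      ((measurable_id.min measurable_const).subtype_mk).prodMk measurable_const
    exact hYT.comp hemb
  -- basic facts about τ on the good region
  have hτ_posT : ∀ s ω, 0 < s → s < κ T ω → τ s ω ∈ Set.Ioc (0 : ℝ) T := by
    intro s ω hs0 hsκ
    constructor
    · by_contra hc'
      push_neg at hc'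
      have := le_of_tau_le (hκ_mono ω) hT₁ (hκ_rc ω 0) hc' (by linarith)
      rw [hκ_zero ω] at this
      exact absurd this (not_le.mpr hs0)
    · exact tau_le_of_lt hT₁ hT hsκ
  have hτ_gtT : ∀ s ω, 0 ≤ s → κ T ω < s → T < τ s ω := by
    intro s ω hs0 hκs
    by_contra hc'
    push_neg at hc'
    have := le_of_tau_le (hκ_mono ω) hT₁ (hκ_rc ω T) hc' (by linarith)
    exact absurd this (not_le.mpr hκs)
  -- a.e.-s equality between the time-changed indicator forms and `g` (and its `Y` version)
  have haes : ∀ ω, ∀ᵐ s ∂(volume.restrict (Set.Ici (0 : ℝ))),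
      ((Set.Ioc (0 : ℝ) T).indicator (fun t => c (min t T) ω) (τ s ω) = g s ω ∧
       (Set.Ioc (0 : ℝ) T).indicator
          (fun t => c (min t T) ω * ENNReal.ofReal (Y (min t T) ω)) (τ s ω)
        = ENNReal.ofReal (Y (σ s ω) ω) * g s ω) := by
    intro ω
    have hnull : volume ({(0 : ℝ)} ∪ {κ T ω} : Set ℝ) = 0 := by
      refine measure_union_null ?_ ?_ <;> exact Real.volume_singleton
    have h1 : ∀ᵐ s ∂(volume : Measure ℝ), s ≠ 0 ∧ s ≠ κ T ω := by
      rw [ae_iff]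
      refine measure_mono_null (fun s hs => ?_) hnull
      simp only [mem_setOf_eq, not_and_or, not_not, ne_eq] at hs
      rcases hs with h | h
      · exact Or.inl (by simpa using h)
      · exact Or.inr (by simpa using h)
    filter_upwards [ae_restrict_of_ae h1, ae_restrict_mem measurableSet_Ici] with s hs hs0
    rcases lt_trichotomy s (κ T ω) with hsκ | hsκ | hsκ
    · have hspos : 0 < s := lt_of_le_of_ne hs0 (Ne.symm hs.1)
      have hmem := hτ_posT s ω hspos hsκ
      have hστ : σ s ω = τ s ω := min_eq_left hmem.2
      have hming : min (τ s ω) T = τ s ω := min_eq_left hmem.2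
      constructor
      · rw [Set.indicator_of_mem hmem, hgdef]
        simp only [if_pos hsκ, hσdef, hming]
      · rw [Set.indicator_of_mem hmem, hgdef]
        simp only [if_pos hsκ, hσdef, hming]
        rw [mul_comm]
    · exact absurd hsκ hs.2
    · have hmem := hτ_gtT s ω hs0 hsκ
      have hnmem : τ s ω ∉ Set.Ioc (0 : ℝ) T := fun h => absurd h.2 (not_le.mpr hmem)
      constructor
      · rw [Set.indicator_of_notMem hnmem, hgdef]
        simp only [if_neg (not_lt.mpr hsκ.le)]
      · rw [Set.indicator_of_notMem hnmem, hgdef]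
        simp only [if_neg (not_lt.mpr hsκ.le), mul_zero]
  -- per-s identity via the martingale property
  have hkey : ∀ s : ℝ, 0 ≤ s →
      ∫⁻ ω, ENNReal.ofReal (Z ω) * g s ω ∂P
        = ∫⁻ ω, ENNReal.ofReal (Y (σ s ω) ω) * g s ω ∂P := by
    intro s hs
    -- dyadic approximations of σ s
    set σn : ℕ → Ω → ℝ := fun n ω => min ((⌈σ s ω * 2 ^ n⌉ : ℝ) / 2 ^ n) T with hσndef
    have hmemσ : ∀ ω, σ s ω ∈ Set.Icc (0 : ℝ) T := fun ω => ⟨hσ0 s ω hs, hσleT s ω⟩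
    have hσn : ∀ n, IsStoppingTime ℱ (fun ω => (σn n ω : WithTop ℝ)) :=
      fun n => isStoppingTime_dyadic (hσ s) hT hmemσ n
    have hle : ∀ n ω, σ s ω ≤ σn n ω := by
      intro n ω
      have h2n : (0 : ℝ) < 2 ^ n := by positivity
      refine le_min ?_ (hσleT s ω)
      rw [le_div_iff₀ h2n]
      exact Int.le_ceil _
    have hup : ∀ n ω, σn n ω ≤ σ s ω + ((2 : ℝ) ^ n)⁻¹ := by
      intro n ω
      have h2n : (0 : ℝ) < 2 ^ n := by positivity
      refine le_trans (min_le_left _ _) ?_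
      rw [div_le_iff₀ h2n]
      calc (⌈σ s ω * 2 ^ n⌉ : ℝ) ≤ σ s ω * 2 ^ n + 1 := (Int.ceil_lt_add_one _).le
        _ = (σ s ω + (2 ^ n)⁻¹) * 2 ^ n := by field_simp
    have hmemn : ∀ n ω, σn n ω ∈ Set.Icc (0 : ℝ) T :=
      fun n ω => ⟨le_trans (hσ0 s ω hs) (hle n ω), min_le_right _ _⟩
    have hrangen : ∀ n, (Set.range (σn n)).Countable := by
      intro n
      have : Set.range (σn n) ⊆ (fun k : ℤ => min ((k : ℝ) / 2 ^ n) T) '' univ := by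
        rintro r ⟨ω, rfl⟩
        exact ⟨⌈σ s ω * 2 ^ n⌉, mem_univ _, rfl⟩
      exact (countable_univ.image _).mono this
    have htendσ : ∀ ω, Tendsto (fun n => σn n ω) atTop (nhdsWithin (σ s ω) (Set.Ici (σ s ω))) := by
      intro ω
      have h1 : Tendsto (fun n => σn n ω) atTop (nhds (σ s ω)) := by
        refine tendsto_of_tendsto_of_tendsto_of_le_of_le tendsto_const_nhds ?_
          (fun n => hle n ω) fun n => hup n ω
        have h2 : Tendsto (fun n : ℕ => ((2 : ℝ) ^ n)⁻¹) atTop (nhds 0) := by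
          simp_rw [← inv_pow]
          exact tendsto_pow_atTop_nhds_zero_of_lt_one (by norm_num) (by norm_num)
        simpa using tendsto_const_nhds.add h2
      exact tendsto_nhdsWithin_of_tendsto_nhds_of_eventually_within _ h1
        (Filter.Eventually.of_forall fun n => hle n ω)
    have htendY : ∀ ω, Tendsto (fun n => Y (σn n ω) ω) atTop (nhds (Y (σ s ω) ω)) :=
      fun ω => (hY_rc ω (σ s ω)).tendsto.comp (htendσ ω)
    -- apply the limit lemma
    refine lintegral_limit_condexp_mul hZ_meas hZ_nonneg hZint
      (hσ s).measurableSpace_le (fun n => (hσn n).measurableSpace_le)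
      (fun n => IsStoppingTime.measurableSpace_mono (hσ s) (hσn n) (fun ω => WithTop.coe_le_coe.mpr (hle n ω)))
      (W := fun n ω => Y (σn n ω) ω)
      (fun n => (measurable_stoppedValue hYprog (hσn n)).mono (hσn n).measurableSpace_le le_rfl)
      (fun n => stoppedValue_ae_eq_condexp_countable hZint hY_mart (hσn n)
        (hrangen n) (hmemn n))
      (fun n ω => hY_nonneg _ ω) htendY
      (measurable_stoppedValue hYprog (hσ s)) (fun ω => hY_nonneg _ ω) ?_
    -- g s is measurable w.r.t. the stopped σ-algebra
    have h1 : MeasurableSet[(hσ s).measurableSpace] {ω | s < κ T ω} :=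
      measurableSet_lt_kappaT hT hκ_adapted hκ_mono hs (hσ s)
    have h2 : Measurable[(hσ s).measurableSpace] fun ω => c (σ s ω) ω :=
      measurable_stoppedValue hc (hσ s)
    exact Measurable.ite h1 h2 measurable_const
  -- now the main computation
  have hκf0 : ∀ ω, (⟨fun t => κ t ω, hκ_mono ω, hκ_rc ω⟩ : StieltjesFunction ℝ) 0 = 0 :=
    fun ω => hκ_zero ω
  calc ∫⁻ ω, (∫⁻ t in Set.Ioc (0 : ℝ) T, c t ω
        ∂((⟨fun t => κ t ω, hκ_mono ω, hκ_rc ω⟩ : StieltjesFunction ℝ).measure)) ∂Q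
      = ∫⁻ ω, ENNReal.ofReal (Z ω) * (∫⁻ t in Set.Ioc (0 : ℝ) T, c t ω
          ∂((⟨fun t => κ t ω, hκ_mono ω, hκ_rc ω⟩ : StieltjesFunction ℝ).measure)) ∂P := by
        rw [hQ, lintegral_withDensity_eq_lintegral_mul_non_measurable _ hZ_meas.ennreal_ofReal
          (Filter.Eventually.of_forall fun ω => ENNReal.ofReal_lt_top)]
        rfl
    _ = ∫⁻ ω, ∫⁻ s in Set.Ici (0 : ℝ), ENNReal.ofReal (Z ω) * g s ω ∂volume ∂P := by
        refine lintegral_congr fun ω => ?_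
        have hstep1 : ∫⁻ t in Set.Ioc (0 : ℝ) T, c t ω
            ∂((⟨fun t => κ t ω, hκ_mono ω, hκ_rc ω⟩ : StieltjesFunction ℝ).measure)
            = ∫⁻ s in Set.Ici (0 : ℝ), g s ω ∂volume := by
          rw [setLIntegral_congr_fun measurableSet_Ioc
            ((fun t (ht : t ∈ Set.Ioc 0 T) => by simp only [min_eq_left ht.2]) :
              Set.EqOn (fun t => c t ω) (fun t => c (min t T) ω) (Set.Ioc (0:ℝ) T))]
          rw [timeChange _ (hκf0 ω) hT _ (hcsec ω)]
          exact lintegral_congr_ae ((haes ω).mono fun s h => h.1)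
        rw [hstep1, ← lintegral_const_mul' _ _ ENNReal.ofReal_ne_top]
    _ = ∫⁻ s in Set.Ici (0 : ℝ), ∫⁻ ω, ENNReal.ofReal (Z ω) * g s ω ∂P ∂volume := by
        exact lintegral_lintegral_swap ((hZgm.comp measurable_swap).aemeasurable)
    _ = ∫⁻ s in Set.Ici (0 : ℝ), ∫⁻ ω, ENNReal.ofReal (Y (σ s ω) ω) * g s ω ∂P ∂volume := by
        refine setLIntegral_congr_fun measurableSet_Ici
          (fun s hs => hkey s hs)
    _ = ∫⁻ ω, ∫⁻ s in Set.Ici (0 : ℝ), ENNReal.ofReal (Y (σ s ω) ω) * g s ω ∂volume ∂P := by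
        exact lintegral_lintegral_swap hYgm.aemeasurable
    _ = ∫⁻ ω, (∫⁻ t in Set.Ioc (0 : ℝ) T, c t ω * ENNReal.ofReal (Y t ω)
          ∂((⟨fun t => κ t ω, hκ_mono ω, hκ_rc ω⟩ : StieltjesFunction ℝ).measure)) ∂P := by
        refine lintegral_congr fun ω => ?_
        have hmul : Measurable fun t : ℝ => c (min t T) ω * ENNReal.ofReal (Y (min t T) ω) :=
          (hcsec ω).mul ((hYsec ω).ennreal_ofReal)
        rw [← lintegral_congr_ae ((haes ω).mono fun s h => h.2),
          ← timeChange _ (hκf0 ω) hT _ hmul]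
        refine setLIntegral_congr_fun measurableSet_Ioc
          (fun t (ht : t ∈ Set.Ioc 0 T) => by simp only [min_eq_left ht.2])
end

section
/- Suppose Λ is a positive continuous linear functional on L∞(ν) (i.e. Λ(f) ≥ 0 whenever f ≥ 0 ν-a.e.) that decomposes as Λ = Λ_r + Λ_s, where Λ_r(f) = ∫_X f Y dν for some ν-integrable function Y ≥ 0, and Λ_s is a positive continuous linear functional with the singularity property: for every ε > 0 there exists A ∈ Σ with ν(X∖A) < ε and Λ_s(f·1_A) = 0 for all f ∈ L∞(ν). Then sup_c ( 𝐔(c) − Λ(c) ) = sup_c ( 𝐔(c) − Λ_r(c) ), where both suprema are taken over all bounded measurable functions c: X → (0,∞). -/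
open MeasureTheory

/-- The utility functional `𝐔(c) = ∫ U(x, c(x)) dν`, as an extended-real number, with the
convention that the value is `−∞` (`⊥`) whenever the integral of the negative part is
infinite (in `EReal`, `⊤ - ⊤ = ⊥`, so the subtraction below implements this convention). -/
noncomputable def utilityFunctional {X : Type*} [MeasurableSpace X] (ν : Measure X)
    (U : X → ℝ → ℝ) (c : X → ℝ) : EReal :=
  ((∫⁻ x, ENNReal.ofReal (U x (c x)) ∂ν : ENNReal) : EReal) -
    ((∫⁻ x, ENNReal.ofReal (-(U x (c x))) ∂ν : ENNReal) : EReal)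

section helpers
variable {X : Type*} [MeasurableSpace X] {ν : Measure X} {U : X → ℝ → ℝ} {c : X → ℝ}

lemma utilityFunctional_eq_bot (hN : (∫⁻ x, ENNReal.ofReal (-(U x (c x))) ∂ν) = ⊤) :
    utilityFunctional ν U c = ⊥ := by
  rw [utilityFunctional, hN, EReal.coe_ennreal_top, EReal.sub_top]

lemma neg_lintegral_ne_top (h : utilityFunctional ν U c ≠ ⊥) :
    (∫⁻ x, ENNReal.ofReal (-(U x (c x))) ∂ν) ≠ ⊤ :=
  fun hN => h (utilityFunctional_eq_bot hN)

lemma ennnorm_eq_ofReal_add (a : ℝ) :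
    (‖a‖₊ : ENNReal) = ENNReal.ofReal a + ENNReal.ofReal (-a) := by
  rcases le_total 0 a with h | h
  · rw [ENNReal.ofReal_of_nonpos (neg_nonpos.mpr h), add_zero, ← enorm_eq_nnnorm, Real.enorm_eq_ofReal_abs,
      abs_of_nonneg h]
  · rw [ENNReal.ofReal_of_nonpos h, zero_add, ← enorm_eq_nnnorm, Real.enorm_eq_ofReal_abs, abs_of_nonpos h]

lemma integrable_of_lintegrals {f : X → ℝ} (hm : Measurable f)
    (hP : (∫⁻ x, ENNReal.ofReal (f x) ∂ν) ≠ ⊤)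
    (hN : (∫⁻ x, ENNReal.ofReal (-(f x)) ∂ν) ≠ ⊤) : Integrable f ν := by
  refine ⟨hm.aestronglyMeasurable, ?_⟩
  rw [HasFiniteIntegral]
  calc (∫⁻ x, (‖f x‖₊ : ENNReal) ∂ν)
      = ∫⁻ x, (ENNReal.ofReal (f x) + ENNReal.ofReal (-(f x))) ∂ν := by
        simp_rw [ennnorm_eq_ofReal_add]
    _ = (∫⁻ x, ENNReal.ofReal (f x) ∂ν) + ∫⁻ x, ENNReal.ofReal (-(f x)) ∂ν :=
        lintegral_add_left hm.ennreal_ofReal _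
    _ < ⊤ := ENNReal.add_lt_top.mpr ⟨hP.lt_top, hN.lt_top⟩

lemma lintegral_ofReal_ne_top_of_integrable {f : X → ℝ} (hi : Integrable f ν) :
    (∫⁻ x, ENNReal.ofReal (f x) ∂ν) ≠ ⊤ :=
  ne_top_of_le_ne_top hi.2.ne (lintegral_mono fun x => by
    rw [Real.enorm_eq_ofReal_abs]; exact ENNReal.ofReal_le_ofReal (le_abs_self _))

lemma coe_ennreal_eq_coe_toReal {P : ENNReal} (hP : P ≠ ⊤) :
    (P : EReal) = ((P.toReal : ℝ) : EReal) := by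
  conv_lhs => rw [← ENNReal.ofReal_toReal hP]
  rw [EReal.coe_ennreal_ofReal, max_eq_left ENNReal.toReal_nonneg]

lemma utilityFunctional_eq_integral (hi : Integrable (fun x => U x (c x)) ν) :
    utilityFunctional ν U c = ((∫ x, U x (c x) ∂ν : ℝ) : EReal) := by
  have hP := lintegral_ofReal_ne_top_of_integrable hi
  have hN := lintegral_ofReal_ne_top_of_integrable hi.neg
  simp only [Pi.neg_apply] at hN
  rw [utilityFunctional, coe_ennreal_eq_coe_toReal hP, coe_ennreal_eq_coe_toReal hN,
    ← EReal.coe_sub, integral_eq_lintegral_pos_part_sub_lintegral_neg_part hi]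

lemma ereal_le_of_forall_sub_le {r : ℝ} {S : EReal}
    (h : ∀ η : ℝ, 0 < η → ((r - η : ℝ) : EReal) ≤ S) : (r : EReal) ≤ S := by
  induction S using EReal.rec with
  | bot => exact absurd (le_bot_iff.mp (h 1 one_pos)) (EReal.coe_ne_bot _)
  | coe s =>
    rw [EReal.coe_le_coe_iff]
    refine le_of_forall_pos_le_add fun ε hε => ?_
    have := EReal.coe_le_coe_iff.mp (h ε hε)
    linarith
  | top => exact le_top

end helpers

/-- Second assertion of Proposition 4.1, in abstract form: if a positive continuous linear
functional `Λ` on `L∞(ν)` decomposes as `Λ = Λ_r + Λ_s`, where `Λ_r(f) = ∫ f·Y dν` for a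
`ν`-integrable `Y ≥ 0` and `Λ_s` is positive and singular (it vanishes on sets of almost
full measure), then `sup_c (𝐔(c) − Λ(c)) = sup_c (𝐔(c) − Λ_r(c))`, both suprema being over
bounded measurable functions `c : X → (0,∞)`. -/
theorem conjugate_eq_conjugate_of_regular_part
    {X : Type*} [MeasurableSpace X] (ν : Measure X) [IsProbabilityMeasure ν]
    (U U' : X → ℝ → ℝ) (K₂ : ℝ → ℝ) (G : ℝ)
    (hU_meas : Measurable (Function.uncurry U))
    (hU_concave : ∀ x, StrictConcaveOn ℝ (Set.Ioi 0) (U x))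
    (hU_mono : ∀ x, StrictMonoOn (U x) (Set.Ioi 0))
    (hU_deriv : ∀ x, ∀ c ∈ Set.Ioi (0 : ℝ), HasDerivAt (U x) (U' x c) c)
    (hU'_cont : ∀ x, ContinuousOn (U' x) (Set.Ioi 0))
    (hK₂_cont : ContinuousOn K₂ (Set.Ioi 0))
    (hK₂_anti : StrictAntiOn K₂ (Set.Ioi 0))
    (hK₂_pos : ∀ c ∈ Set.Ioi (0 : ℝ), 0 < K₂ c)
    (hU'_le : ∀ x, ∀ c ∈ Set.Ioi (0 : ℝ), U' x c ≤ K₂ c)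
    (hG : ∀ x, G ≤ U x 1)
    -- Assumption 2.3 of the paper
    (h_delta : ∀ c : X → ℝ, Measurable c → (∀ x, 0 < c x) →
      utilityFunctional ν U c ≠ ⊥ → ∀ δ : ℝ, 0 < δ → δ < 1 →
      utilityFunctional ν U (fun x => δ * c x) ≠ ⊥)
    -- the positive functional `Λ` and its decomposition `Λ = Λ_r + Λ_s`
    (Λ Λs : Lp ℝ ⊤ ν →L[ℝ] ℝ)
    (hΛ_pos : ∀ f : Lp ℝ ⊤ ν, (∀ᵐ x ∂ν, 0 ≤ f x) → 0 ≤ Λ f)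
    (Y : X → ℝ) (hY_int : Integrable Y ν) (hY_nonneg : ∀ x, 0 ≤ Y x)
    (h_decomp : ∀ f : Lp ℝ ⊤ ν, Λ f = (∫ x, f x * Y x ∂ν) + Λs f)
    (hΛs_pos : ∀ f : Lp ℝ ⊤ ν, (∀ᵐ x ∂ν, 0 ≤ f x) → 0 ≤ Λs f)
    (hΛs_sing : ∀ ε : ℝ, 0 < ε → ∃ A : Set X, MeasurableSet A ∧ ν Aᶜ < ENNReal.ofReal ε ∧
      ∀ f g : Lp ℝ ⊤ ν, (g : X → ℝ) =ᵐ[ν] (fun x => A.indicator (fun y => f y) x) → Λs g = 0) :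
    sSup {z : EReal | ∃ (c : X → ℝ) (cL : Lp ℝ ⊤ ν),
        Measurable c ∧ (∀ x, 0 < c x) ∧ (∃ M : ℝ, ∀ x, c x ≤ M) ∧
        (cL : X → ℝ) =ᵐ[ν] c ∧
        z = utilityFunctional ν U c - ((Λ cL : ℝ) : EReal)}
      = sSup {z : EReal | ∃ c : X → ℝ,
        Measurable c ∧ (∀ x, 0 < c x) ∧ (∃ M : ℝ, ∀ x, c x ≤ M) ∧
        z = utilityFunctional ν U c - ((∫ x, c x * Y x ∂ν : ℝ) : EReal)} := by
  have hne : Nonempty X := by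
    by_contra h
    rw [not_nonempty_iff] at h
    have h1 : ν Set.univ = 1 := measure_univ
    rw [Set.univ_eq_empty_iff.mpr h, measure_empty] at h1
    exact zero_ne_one h1
  apply le_antisymm
  · refine sSup_le ?_
    rintro z ⟨c, cL, hc_meas, hc_pos, hc_bdd, hae, rfl⟩
    refine le_trans ?_ (le_sSup ⟨c, hc_meas, hc_pos, hc_bdd, rfl⟩)
    refine EReal.sub_le_sub le_rfl (EReal.coe_le_coe_iff.mpr ?_)
    have h1 : (∫ x, cL x * Y x ∂ν) = ∫ x, c x * Y x ∂ν :=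
      integral_congr_ae (hae.mono fun x hx => by dsimp only; rw [hx])
    have h2 : 0 ≤ Λs cL :=
      hΛs_pos cL (hae.mono fun x hx => by rw [hx]; exact (hc_pos x).le)
    have h3 := h_decomp cL
    rw [h1] at h3
    linarith
  · refine sSup_le ?_
    rintro z ⟨c, hc_meas, hc_pos, ⟨M, hM⟩, rfl⟩
    obtain ⟨x₀⟩ := hne
    have hMpos : 0 < M := lt_of_lt_of_le (hc_pos x₀) (hM x₀)
    have hfm : Measurable fun x => U x (c x) :=
      hU_meas.comp (measurable_id.prodMk hc_meas)
    have hcmem : MemLp c ⊤ ν :=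
      memLp_top_of_bound hc_meas.aestronglyMeasurable M
        (Filter.Eventually.of_forall fun x => by
          rw [Real.norm_eq_abs, abs_of_pos (hc_pos x)]; exact hM x)
    have hcL : (hcmem.toLp c : X → ℝ) =ᵐ[ν] c := hcmem.coeFn_toLp
    set cL := hcmem.toLp c with hcLdef
    by_cases hN : (∫⁻ x, ENNReal.ofReal (-(U x (c x))) ∂ν) = ⊤
    · rw [utilityFunctional_eq_bot hN, EReal.bot_sub]
      exact bot_le
    by_cases hP : (∫⁻ x, ENNReal.ofReal (U x (c x)) ∂ν) = ⊤
    · have htop : utilityFunctional ν U c = ⊤ := by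
        rw [utilityFunctional, hP, EReal.coe_ennreal_top, coe_ennreal_eq_coe_toReal hN,
          EReal.top_sub_coe]
      rw [htop, EReal.top_sub_coe]
      refine le_sSup ⟨c, cL, hc_meas, hc_pos, ⟨M, hM⟩, hcL, ?_⟩
      rw [htop, EReal.top_sub_coe]
    -- main case
    have hfi : Integrable (fun x => U x (c x)) ν := integrable_of_lintegrals hfm hP hN
    rw [utilityFunctional_eq_integral hfi, ← EReal.coe_sub]
    refine ereal_le_of_forall_sub_le fun η hη => ?_
    set s₀ := Λs cL with hs₀def
    have hs₀ : 0 ≤ s₀ :=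
      hΛs_pos cL (hcL.mono fun x hx => by rw [hx]; exact (hc_pos x).le)
    set δ := min (1/2 : ℝ) (η / (2 * (s₀ + 1))) with hδdef
    have hδ0 : 0 < δ := lt_min (by norm_num) (div_pos hη (by positivity))
    have hδ1 : δ < 1 := lt_of_le_of_lt (min_le_left _ _) (by norm_num)
    have hδs : δ * s₀ ≤ η / 2 := by
      have h1 : δ ≤ η / (2 * (s₀ + 1)) := min_le_right _ _
      have h2 : δ * s₀ ≤ η / (2 * (s₀ + 1)) * s₀ := mul_le_mul_of_nonneg_right h1 hs₀
      have h3 : η / (2 * (s₀ + 1)) * s₀ ≤ η / 2 := by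
        rw [div_mul_eq_mul_div, div_le_div_iff₀ (by positivity) (by norm_num)]
        nlinarith
      linarith
    have hδc_pos : ∀ x, 0 < δ * c x := fun x => mul_pos hδ0 (hc_pos x)
    have hUδc_ne : utilityFunctional ν U (fun x => δ * c x) ≠ ⊥ := by
      refine h_delta c hc_meas hc_pos ?_ δ hδ0 hδ1
      rw [utilityFunctional_eq_integral hfi]
      exact EReal.coe_ne_bot _
    have hNδ := neg_lintegral_ne_top hUδc_ne
    have hle_c : ∀ x, U x (δ * c x) ≤ U x (c x) := fun x =>
      ((hU_mono x).monotoneOn) (hδc_pos x) (hc_pos x)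
        (by nlinarith [hc_pos x])
    have hPδ : (∫⁻ x, ENNReal.ofReal (U x (δ * c x)) ∂ν) ≠ ⊤ :=
      ne_top_of_le_ne_top hP (lintegral_mono fun x => ENNReal.ofReal_le_ofReal (hle_c x))
    have hmδ : Measurable fun x => U x (δ * c x) :=
      hU_meas.comp (measurable_id.prodMk (hc_meas.const_mul δ))
    have hiδ : Integrable (fun x => U x (δ * c x)) ν := integrable_of_lintegrals hmδ hPδ hNδ
    set g := fun x => U x (c x) - U x (δ * c x) with hgdef
    have hg_int : Integrable g ν := hfi.sub hiδ
    have hg_nonneg : ∀ x, 0 ≤ g x := fun x => sub_nonneg.mpr (hle_c x)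
    have hg_lint_ne : (∫⁻ x, ENNReal.ofReal (g x) ∂ν) ≠ ⊤ :=
      lintegral_ofReal_ne_top_of_integrable hg_int
    obtain ⟨ε', hε'0, hε'⟩ :=
      exists_pos_setLIntegral_lt_of_measure_lt (μ := ν) hg_lint_ne
        (ε := ENNReal.ofReal (η / 2)) (by simp [ENNReal.ofReal_eq_zero]; linarith)
    set e := (min ε' 1).toReal with hedef
    have he_ne_top : min ε' 1 ≠ ⊤ := ne_top_of_le_ne_top (by simp) (min_le_right _ _)
    have he_pos : 0 < e :=
      ENNReal.toReal_pos (lt_min hε'0 zero_lt_one).ne' he_ne_top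
    obtain ⟨A, hA_meas, hA_small, hA_zero⟩ := hΛs_sing e he_pos
    have hAc : ν Aᶜ < ε' := by
      rw [hedef, ENNReal.ofReal_toReal he_ne_top] at hA_small
      exact lt_of_lt_of_le hA_small (min_le_left _ _)
    have hIg : ∫ x in Aᶜ, g x ∂ν < η / 2 := by
      have h1 := hε' Aᶜ hAc
      rw [integral_eq_lintegral_of_nonneg_ae (Filter.Eventually.of_forall hg_nonneg)
        hg_int.aestronglyMeasurable.restrict]
      exact ENNReal.toReal_lt_of_lt_ofReal h1
    classical
    set d := fun x => if x ∈ A then c x else δ * c x with hddef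
    have hd_meas : Measurable d := Measurable.ite hA_meas hc_meas (hc_meas.const_mul δ)
    have hd_pos : ∀ x, 0 < d x := fun x => by
      by_cases h : x ∈ A
      · simp only [hddef, if_pos h]; exact hc_pos x
      · simp only [hddef, if_neg h]; exact hδc_pos x
    have hd_le_c : ∀ x, d x ≤ c x := fun x => by
      by_cases h : x ∈ A
      · simp only [hddef, if_pos h]; exact le_rfl
      · simp only [hddef, if_neg h]; nlinarith [hc_pos x]
    have hd_le_M : ∀ x, d x ≤ M := fun x => (hd_le_c x).trans (hM x)
    have hdmem : MemLp d ⊤ ν :=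
      memLp_top_of_bound hd_meas.aestronglyMeasurable M
        (Filter.Eventually.of_forall fun x => by
          rw [Real.norm_eq_abs, abs_of_pos (hd_pos x)]; exact hd_le_M x)
    have hdL : (hdmem.toLp d : X → ℝ) =ᵐ[ν] d := hdmem.coeFn_toLp
    set dL := hdmem.toLp d with hdLdef
    have hUd_eq : (fun x => U x (d x)) =
        fun x => A.indicator (fun x => U x (c x)) x
          + Aᶜ.indicator (fun x => U x (δ * c x)) x := by
      funext x
      by_cases h : x ∈ A <;> simp [hddef, Set.indicator, h]
    have hUd_int : Integrable (fun x => U x (d x)) ν := by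
      rw [hUd_eq]
      exact (hfi.indicator hA_meas).add (hiδ.indicator hA_meas.compl)
    have hUd_val : ∫ x, U x (d x) ∂ν = ∫ x, U x (c x) ∂ν - ∫ x in Aᶜ, g x ∂ν := by
      rw [hUd_eq, integral_add (hfi.indicator hA_meas) (hiδ.indicator hA_meas.compl),
        integral_indicator hA_meas, integral_indicator hA_meas.compl]
      have h2 : ∫ x in Aᶜ, g x ∂ν
          = ∫ x in Aᶜ, U x (c x) ∂ν - ∫ x in Aᶜ, U x (δ * c x) ∂ν :=
        integral_sub hfi.integrableOn hiδ.integrableOn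
      have h3 : (∫ x in A, U x (c x) ∂ν) + ∫ x in Aᶜ, U x (c x) ∂ν = ∫ x, U x (c x) ∂ν :=
        integral_add_compl hA_meas hfi
      linarith
    have hindmem : MemLp (A.indicator c) ⊤ ν :=
      memLp_top_of_bound ((hc_meas.indicator hA_meas).aestronglyMeasurable) M
        (Filter.Eventually.of_forall fun x => by
          rw [Real.norm_eq_abs]
          by_cases h : x ∈ A <;> simp [Set.indicator, h]
          · rw [abs_of_pos (hc_pos x)]; exact hM x
          · exact hMpos.le)
    set eL := hindmem.toLp (A.indicator c) with heLdef
    have heL : (eL : X → ℝ) =ᵐ[ν] A.indicator c := hindmem.coeFn_toLp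
    have h_eq_Lp : dL = (1 - δ) • eL + δ • cL := by
      apply Lp.ext
      filter_upwards [hdL, heL, hcL, Lp.coeFn_add ((1 - δ) • eL) (δ • cL),
        Lp.coeFn_smul (1 - δ) eL, Lp.coeFn_smul δ cL] with x h1 h2 h3 h4 h5 h6
      rw [h1, h4, Pi.add_apply, h5, h6, Pi.smul_apply, Pi.smul_apply, smul_eq_mul,
        smul_eq_mul, h2, h3]
      by_cases h : x ∈ A <;> simp [hddef, Set.indicator, h] <;> ring
    have hΛs_eL : Λs eL = 0 := by
      refine hA_zero cL eL ?_
      filter_upwards [heL, hcL] with x h1 h2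
      rw [h1]
      by_cases h : x ∈ A <;> simp [Set.indicator, h, h2]
    have hΛs_dL : Λs dL = δ * s₀ := by
      rw [h_eq_Lp, map_add, Λs.map_smul, Λs.map_smul, hΛs_eL, smul_zero, zero_add,
        smul_eq_mul, ← hs₀def]
    have hcY_int : Integrable (fun x => c x * Y x) ν :=
      hY_int.bdd_mul hc_meas.aestronglyMeasurable
        (Filter.Eventually.of_forall fun x => by rw [Real.norm_eq_abs, abs_of_pos (hc_pos x)]; exact hM x)
    have hdY_int : Integrable (fun x => d x * Y x) ν :=
      hY_int.bdd_mul hd_meas.aestronglyMeasurable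
        (Filter.Eventually.of_forall fun x => by rw [Real.norm_eq_abs, abs_of_pos (hd_pos x)]; exact hd_le_M x)
    have hdY_le : ∫ x, dL x * Y x ∂ν ≤ ∫ x, c x * Y x ∂ν := by
      have h1 : ∫ x, dL x * Y x ∂ν = ∫ x, d x * Y x ∂ν :=
        integral_congr_ae (hdL.mono fun x hx => by dsimp only; rw [hx])
      rw [h1]
      exact integral_mono hdY_int hcY_int fun x =>
        mul_le_mul_of_nonneg_right (hd_le_c x) (hY_nonneg x)
    have hΛdL : Λ dL = (∫ x, dL x * Y x ∂ν) + δ * s₀ := by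
      rw [h_decomp dL, hΛs_dL]
    refine le_trans ?_ (le_sSup ⟨d, dL, hd_meas, hd_pos, ⟨M, hd_le_M⟩, hdL, rfl⟩)
    rw [utilityFunctional_eq_integral hUd_int, ← EReal.coe_sub, EReal.coe_le_coe_iff,
      hUd_val, hΛdL]
    linarith
end

section
/- For all real numbers α > 0 and β > 0, the function z ↦ H_{−β/α−1}(z) / H_{−β/α}(z) is bounded on [0,∞); that is, there exists a constant C > 0 such that H_{−β/α−1}(z) ≤ C · H_{−β/α}(z) for all z ≥ 0. In particular, the process ν in the explicit solution of the logarithmic-utility example, given by ν_t = −sgn(R_t)·h(|R_t|/√2) with h(z) = −(2β/α)·H_{−β/α−1}(z)/H_{−β/α}(z), is a bounded process. -/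
/-- The Hermite function `H_ξ(x)`, defined for `ξ < 0` and `x ≥ 0` by the convergent
integral `H_ξ(x) = (1/(2Γ(−ξ))) ∫_0^∞ e^{−s−2x√s} s^{−ξ/2−1} ds`. -/
noncomputable def hermiteH (ξ x : ℝ) : ℝ :=
  (1 / (2 * Real.Gamma (-ξ))) *
    ∫ s in Set.Ioi (0 : ℝ), Real.exp (-s - 2 * x * Real.sqrt s) * s ^ (-ξ / 2 - 1)

open Real MeasureTheory Set in
lemma aux_integrable {p c x : ℝ} (hp : 0 < p) (hc : 0 < c) (hx : 0 ≤ x) :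
    IntegrableOn (fun s : ℝ => Real.exp (-(c*s) - 2*x*Real.sqrt s) * s ^ (p-1))
      (Ioi (0:ℝ)) := by
  have hbound : IntegrableOn (fun s : ℝ => s ^ (p-1) * Real.exp (-c * s ^ (1:ℝ)))
      (Ioi (0:ℝ)) :=
    integrableOn_rpow_mul_exp_neg_mul_rpow (by linarith) one_pos hc
  have hm : Measurable (fun s : ℝ => Real.exp (-(c*s) - 2*x*Real.sqrt s) * s ^ (p-1)) := by
    fun_prop
  refine hbound.integrable.mono hm.aestronglyMeasurable ?_
  refine (ae_restrict_iff' measurableSet_Ioi).mpr (ae_of_all _ fun s hs => ?_)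
  have hs0 : 0 < s := hs
  have h1 : Real.exp (-(c*s) - 2*x*Real.sqrt s) ≤ Real.exp (-(c*s)) := by
    apply Real.exp_le_exp.mpr
    have := mul_nonneg (mul_nonneg (by norm_num : (0:ℝ) ≤ 2) hx) (Real.sqrt_nonneg s)
    linarith
  rw [Real.norm_eq_abs, Real.norm_eq_abs, abs_of_nonneg
    (mul_nonneg (Real.exp_pos _).le (Real.rpow_nonneg hs0.le _)),
    abs_of_nonneg (mul_nonneg (Real.rpow_nonneg hs0.le _) (Real.exp_pos _).le),
    Real.rpow_one, mul_comm (s ^ (p-1))]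
  exact mul_le_mul_of_nonneg_right (by simpa [neg_mul] using h1) (Real.rpow_nonneg hs0.le _)

open Real MeasureTheory Set in
lemma main_ineq {p x : ℝ} (hp : 0 < p) (hx : 0 ≤ x) :
    ∫ s in Ioi (0:ℝ), Real.exp (-s - 2*x*Real.sqrt s) * s ^ (p - 1/2) ≤
      2^p * ∫ s in Ioi (0:ℝ), Real.exp (-s - 2*x*Real.sqrt s) * s ^ (p - 1) := by
  -- notation
  set G : ℝ → ℝ := fun s => Real.exp (-((1/2:ℝ)*s) - 2*x*Real.sqrt s) * s ^ (p-1) with hG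
  set g : ℝ → ℝ := fun u => Real.exp (-u - 2*(Real.sqrt 2*x)*Real.sqrt u) * u ^ (p-1) with hg
  have hGint : IntegrableOn G (Ioi (0:ℝ)) := aux_integrable hp one_half_pos hx
  have hgint : IntegrableOn g (Ioi (0:ℝ)) := by
    have := aux_integrable (c := 1) (x := Real.sqrt 2 * x) hp one_pos
      (mul_nonneg (Real.sqrt_nonneg 2) hx)
    simpa [one_mul] using this
  have hnumint : IntegrableOn
      (fun s : ℝ => Real.exp (-s - 2*x*Real.sqrt s) * s ^ (p - 1/2)) (Ioi (0:ℝ)) := by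
    have h := aux_integrable (p := p + 1/2) (c := 1) (x := x) (by linarith) one_pos hx
    have e : p + 1/2 - 1 = p - 1/2 := by ring
    simp only [one_mul, e] at h
    exact h
  have hdenint : IntegrableOn
      (fun s : ℝ => Real.exp (-s - 2*x*Real.sqrt s) * s ^ (p - 1)) (Ioi (0:ℝ)) := by
    have := aux_integrable (p := p) (c := 1) (x := x) hp one_pos hx
    simpa [one_mul] using this
  -- step 1 : numerator ≤ ∫ G
  have step1 : ∫ s in Ioi (0:ℝ), Real.exp (-s - 2*x*Real.sqrt s) * s ^ (p - 1/2) ≤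
      ∫ s in Ioi (0:ℝ), G s := by
    refine setIntegral_mono_on hnumint hGint measurableSet_Ioi fun s hs => ?_
    have hs0 : (0:ℝ) < s := hs
    have hsqrt : Real.sqrt s ≤ Real.exp (s/2) := by
      have h1 : Real.sqrt s ≤ s/2 + 1 := by
        nlinarith [Real.sq_sqrt hs0.le, Real.sqrt_nonneg s, sq_nonneg (Real.sqrt s - 1)]
      linarith [Real.add_one_le_exp (s/2)]
    have hsplit : s ^ (p - 1/2) = Real.sqrt s * s ^ (p - 1) := by
      rw [Real.sqrt_eq_rpow, ← Real.rpow_add hs0]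
      ring_nf
    simp only [hG, hsplit]
    rw [← mul_assoc]
    refine mul_le_mul_of_nonneg_right ?_ (Real.rpow_nonneg hs0.le _)
    calc Real.exp (-s - 2*x*Real.sqrt s) * Real.sqrt s
        ≤ Real.exp (-s - 2*x*Real.sqrt s) * Real.exp (s/2) :=
          mul_le_mul_of_nonneg_left hsqrt (Real.exp_pos _).le
      _ = Real.exp (-((1/2:ℝ)*s) - 2*x*Real.sqrt s) := by
          rw [← Real.exp_add]; ring_nf
  -- step 2 : ∫ G = 2^p ∫ g
  have step2 : ∫ s in Ioi (0:ℝ), G s = 2^p * ∫ u in Ioi (0:ℝ), g u := by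
    have hcomp := MeasureTheory.integral_comp_mul_left_Ioi G 0 (by norm_num : (0:ℝ) < 2)
    rw [mul_zero] at hcomp
    have hGg : ∀ u ∈ Ioi (0:ℝ), G (2*u) = 2^(p-1) * g u := by
      intro u hu
      have hu0 : (0:ℝ) < u := hu
      have h1 : Real.sqrt (2*u) = Real.sqrt 2 * Real.sqrt u := Real.sqrt_mul (by norm_num) u
      have h2 : (2*u) ^ (p-1) = 2^(p-1) * u ^ (p-1) :=
        Real.mul_rpow (by norm_num) hu0.le
      simp only [hG, hg, h1, h2]
      ring_nf
    have : ∫ u in Ioi (0:ℝ), G (2*u) = ∫ u in Ioi (0:ℝ), 2^(p-1) * g u :=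
      setIntegral_congr_fun measurableSet_Ioi hGg
    rw [this, integral_const_mul] at hcomp
    rw [smul_eq_mul] at hcomp
    have h2 : (2:ℝ)^p = 2 * 2^(p-1) := by
      have h3 := Real.rpow_add (show (0:ℝ) < 2 by norm_num) 1 (p-1)
      rw [Real.rpow_one] at h3
      rw [show (1:ℝ) + (p-1) = p by ring] at h3
      exact h3
    rw [h2]
    linear_combination (-2 : ℝ) * hcomp
  -- step 3 : ∫ g ≤ denominator
  have step3 : ∫ u in Ioi (0:ℝ), g u ≤
      ∫ s in Ioi (0:ℝ), Real.exp (-s - 2*x*Real.sqrt s) * s ^ (p - 1) := by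
    refine setIntegral_mono_on hgint hdenint measurableSet_Ioi fun u hu => ?_
    have hu0 : (0:ℝ) < u := hu
    have : Real.exp (-u - 2*(Real.sqrt 2*x)*Real.sqrt u) ≤ Real.exp (-u - 2*x*Real.sqrt u) := by
      apply Real.exp_le_exp.mpr
      have h2 : (1:ℝ) ≤ Real.sqrt 2 := by
        rw [show (1:ℝ) = Real.sqrt 1 by simp]
        exact Real.sqrt_le_sqrt (by norm_num)
      have := mul_nonneg (mul_nonneg hx (Real.sqrt_nonneg u)) (sub_nonneg.mpr h2)
      nlinarith [this]
    exact mul_le_mul_of_nonneg_right this (Real.rpow_nonneg hu0.le _)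
  have h2p : (0:ℝ) < 2^p := Real.rpow_pos_of_pos (by norm_num) p
  calc _ ≤ ∫ s in Ioi (0:ℝ), G s := step1
    _ = 2^p * ∫ u in Ioi (0:ℝ), g u := step2
    _ ≤ _ := by exact mul_le_mul_of_nonneg_left step3 h2p.le

/-- For all `α > 0` and `β > 0`, the function `z ↦ H_{−β/α−1}(z) / H_{−β/α}(z)` is bounded
on `[0,∞)`: there is a constant `C > 0` with `H_{−β/α−1}(z) ≤ C · H_{−β/α}(z)` for all
`z ≥ 0`.  (In particular the process `ν_t = −sgn(R_t) h(|R_t|/√2)`, with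
`h(z) = −(2β/α) H_{−β/α−1}(z)/H_{−β/α}(z)`, is bounded.) -/
theorem hermite_ratio_bounded (α β : ℝ) (hα : 0 < α) (hβ : 0 < β) :
    ∃ C : ℝ, 0 < C ∧ ∀ z : ℝ, 0 ≤ z →
      hermiteH (-β / α - 1) z ≤ C * hermiteH (-β / α) z := by
  set p : ℝ := β / (2 * α) with hpdef
  have hp : 0 < p := by positivity
  clear_value p
  refine ⟨2 ^ p / (2 * p), by positivity, fun z hz => ?_⟩
  unfold hermiteH
  have e1 : -(-β / α - 1) = 2 * p + 1 := by rw [hpdef]; field_simp; ring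
  have e2 : -(-β / α) = 2 * p := by rw [hpdef]; field_simp
  rw [e1, e2]
  rw [show (2 * p + 1) / 2 - 1 = p - 1 / 2 by ring, show 2 * p / 2 - 1 = p - 1 by ring]
  have hI := main_ineq hp hz
  have hg : Real.Gamma (2 * p + 1) = 2 * p * Real.Gamma (2 * p) :=
    Real.Gamma_add_one (by positivity)
  have hgpos : 0 < Real.Gamma (2 * p) := Real.Gamma_pos_of_pos (by positivity)
  rw [hg]
  calc 1 / (2 * (2 * p * Real.Gamma (2 * p))) *
        ∫ s in Set.Ioi (0:ℝ), Real.exp (-s - 2 * z * Real.sqrt s) * s ^ (p - 1/2)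
      ≤ 1 / (2 * (2 * p * Real.Gamma (2 * p))) *
        (2 ^ p * ∫ s in Set.Ioi (0:ℝ), Real.exp (-s - 2 * z * Real.sqrt s) * s ^ (p - 1)) :=
        mul_le_mul_of_nonneg_left hI (by positivity)
    _ = 2 ^ p / (2 * p) *
        (1 / (2 * Real.Gamma (2 * p)) *
          ∫ s in Set.Ioi (0:ℝ), Real.exp (-s - 2 * z * Real.sqrt s) * s ^ (p - 1)) := by
        rw [mul_comm (2 ^ p / (2 * p))]
        field_simp
end

section
/- Suppose β > 0 and there exists a constant ψ > 0 such that E[ e^{−β τ_u} 1_{{τ_u < ∞}} ] = e^{−u ψ} for all u ≥ 0. Then for every a > 0, E[ ∫_{(0, τ_a]} e^{−β t} dκ_t ] = (1 − e^{−a ψ}) / ψ, where for each ω the inner integral is taken over (0, τ_a(ω)] ∩ [0,∞) with respect to the Lebesgue–Stieltjes measure induced by the path t ↦ κ_t(ω) (the integral over all of (0,∞) when τ_a(ω) = ∞). -/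
open MeasureTheory Filter
open scoped Topology ENNReal

/-- `∫_{(T,∞)} β e^{-βs} ds = e^{-βT}`. -/
lemma aux_exp_lintegral {β : ℝ} (hβ : 0 < β) (T : ℝ) :
    ∫⁻ s in Set.Ioi T, ENNReal.ofReal (β * Real.exp (-β * s)) =
      ENNReal.ofReal (Real.exp (-β * T)) := by
  have hint : IntegrableOn (fun s : ℝ => β * Real.exp (-β * s)) (Set.Ioi T) :=
    (exp_neg_integrableOn_Ioi T hβ).const_mul β
  rw [← ofReal_integral_eq_lintegral_ofReal hint
    (Filter.Eventually.of_forall fun x => by positivity)]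
  congr 1
  have hderiv : ∀ x ∈ Set.Ioi T,
      HasDerivAt (fun x : ℝ => -Real.exp (-β * x)) (β * Real.exp (-β * x)) x := by
    intro x _
    have h1 : HasDerivAt (fun x : ℝ => -β * x) (-β) x := by
      simpa using (hasDerivAt_id x).const_mul (-β)
    have h2 := h1.exp.neg
    refine h2.congr_deriv ?_
    ring
  have hcont : ContinuousWithinAt (fun x : ℝ => -Real.exp (-β * x)) (Set.Ici T) T :=
    (Continuous.continuousWithinAt (by continuity))
  have htend : Tendsto (fun x : ℝ => -Real.exp (-β * x)) atTop (𝓝 0) := by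
    have : Tendsto (fun x : ℝ => Real.exp (-β * x)) atTop (𝓝 0) :=
      Real.tendsto_exp_atBot.comp (tendsto_id.const_mul_atTop_of_neg (by linarith))
    simpa using this.neg
  have := integral_Ioi_of_hasDerivAt_of_tendsto hcont hderiv hint htend
  rw [this]
  simp

/-- `∫_{[0,a)} e^{-uψ} du = (1 - e^{-aψ})/ψ`. -/
lemma aux_final_lintegral {ψ a : ℝ} (hψ : 0 < ψ) (ha : 0 < a) :
    ∫⁻ u in Set.Ico 0 a, ENNReal.ofReal (Real.exp (-u * ψ)) =
      ENNReal.ofReal ((1 - Real.exp (-a * ψ)) / ψ) := by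
  have hint : IntegrableOn (fun u : ℝ => Real.exp (-u * ψ)) (Set.Ico 0 a) :=
    (ContinuousOn.integrableOn_Icc ((by continuity : Continuous fun u : ℝ =>
      Real.exp (-u * ψ)).continuousOn)).mono_set Set.Ico_subset_Icc_self
  rw [← ofReal_integral_eq_lintegral_ofReal hint
    (Filter.Eventually.of_forall fun x => (Real.exp_pos _).le)]
  congr 1
  rw [integral_Ico_eq_integral_Ioo, ← integral_Ioc_eq_integral_Ioo,
    ← intervalIntegral.integral_of_le ha.le]
  have hderiv : ∀ x ∈ Set.uIcc 0 a,
      HasDerivAt (fun x : ℝ => -(Real.exp (-x * ψ) / ψ)) (Real.exp (-x * ψ)) x := by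
    intro x _
    have h1 : HasDerivAt (fun x : ℝ => -x * ψ) (-ψ) x := by
      simpa using ((hasDerivAt_id x).neg.mul_const ψ)
    have h2 := (h1.exp.div_const ψ).neg
    refine h2.congr_deriv ?_
    field_simp
  rw [intervalIntegral.integral_eq_sub_of_hasDerivAt hderiv
    (Continuous.intervalIntegrable (by continuity) _ _)]
  simp only [neg_zero, zero_mul, Real.exp_zero]
  ring

/-- The change-of-variables computation (equation (5.17) of the paper): if `κ` is a
continuous nondecreasing process started at `0`, with right-continuous inverse
`τ_u = inf{t > 0 : κ_t > u}`, and `E[e^{−βτ_u} 1_{τ_u<∞}] = e^{−uψ}` for all `u ≥ 0`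
(for some constants `β, ψ > 0`), then for every `a > 0`,
`E[∫_{(0,τ_a]} e^{−βt} dκ_t] = (1 − e^{−aψ})/ψ`, the inner integral being taken with
respect to the Lebesgue–Stieltjes measure of the path `t ↦ κ_t(ω)`. -/
theorem expected_discounted_clock_integral
    {Ω : Type*} [MeasurableSpace Ω] (P : Measure Ω) [IsProbabilityMeasure P]
    (κ : Ω → ℝ → ℝ)
    (hκ_mono : ∀ ω, Monotone (κ ω))
    (hκ_cont : ∀ ω, Continuous (κ ω))
    (hκ_zero : ∀ ω, ∀ t ≤ (0 : ℝ), κ ω t = 0)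
    -- the generalized inverse `τ_u = inf{t > 0 : κ_t > u} ∈ [0,∞]`
    (τ : ℝ → Ω → ENNReal)
    (hτ : ∀ u ω, τ u ω =
      sInf {s : ENNReal | ∃ t : ℝ, 0 < t ∧ s = ENNReal.ofReal t ∧ u < κ ω t})
    (hτ_meas : ∀ u, Measurable (τ u))
    (β ψ : ℝ) (hβ : 0 < β) (hψ : 0 < ψ)
    -- the Laplace transform assumption `E[e^{−βτ_u} 1_{τ_u < ∞}] = e^{−uψ}`
    (h_laplace : ∀ u : ℝ, 0 ≤ u →
      ∫⁻ ω, (if τ u ω < ⊤ then ENNReal.ofReal (Real.exp (-β * (τ u ω).toReal)) else 0) ∂P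
        = ENNReal.ofReal (Real.exp (-u * ψ))) :
    ∀ a : ℝ, 0 < a →
      ∫⁻ ω, (∫⁻ t in {t : ℝ | 0 < t ∧ ENNReal.ofReal t ≤ τ a ω},
          ENNReal.ofReal (Real.exp (-β * t))
          ∂((⟨κ ω, hκ_mono ω, fun x => (hκ_cont ω).continuousWithinAt⟩ :
              StieltjesFunction ℝ).measure)) ∂P
        = ENNReal.ofReal ((1 - Real.exp (-a * ψ)) / ψ) := by
  intro a ha
  classical
  set g : ℝ → ℝ≥0∞ := fun s => ENNReal.ofReal (β * Real.exp (-β * s)) with hg_def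
  have hg_meas : Measurable g :=
    ENNReal.measurable_ofReal.comp (Continuous.measurable (by fun_prop))
  -- basic facts about κ
  have hκ0 : ∀ ω, κ ω 0 = 0 := fun ω => hκ_zero ω 0 le_rfl
  have hκ_nonneg : ∀ ω t, 0 ≤ κ ω t := by
    intro ω t
    rcases le_or_gt t 0 with h | h
    · exact (hκ_zero ω t h).ge
    · calc (0:ℝ) = κ ω 0 := (hκ0 ω).symm
        _ ≤ κ ω t := hκ_mono ω h.le
  -- the key equivalence between κ and τ
  have key : ∀ ω (s u : ℝ), 0 < s → 0 ≤ u → (u < κ ω s ↔ τ u ω < ENNReal.ofReal s) := by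
    intro ω s u hs hu
    rw [hτ]
    constructor
    · intro h
      have hopen : IsOpen {t : ℝ | u < κ ω t} := isOpen_lt continuous_const (hκ_cont ω)
      obtain ⟨ε, hε, hball⟩ := Metric.isOpen_iff.1 hopen s h
      set t := max (s / 2) (s - ε / 2) with ht_def
      have ht1 : 0 < t := lt_max_of_lt_left (by linarith)
      have ht2 : t < s := max_lt (by linarith) (by linarith)
      have htmem : u < κ ω t := by
        apply hball
        rw [Metric.mem_ball, Real.dist_eq, abs_lt]
        constructor
        · have : s - ε / 2 ≤ t := le_max_right _ _
          linarith
        · linarith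
      refine lt_of_le_of_lt (sInf_le ⟨t, ht1, rfl, htmem⟩) ?_
      exact (ENNReal.ofReal_lt_ofReal_iff hs).2 ht2
    · intro h
      obtain ⟨x, ⟨t, ht0, rfl, hkt⟩, hxs⟩ := sInf_lt_iff.1 h
      have hts : t < s := by
        by_contra hc
        push_neg at hc
        exact absurd hxs (not_lt.2 (ENNReal.ofReal_le_ofReal hc))
      exact lt_of_lt_of_le hkt (hκ_mono ω hts.le)
  -- measurability of slices of κ
  have hκ_meas : ∀ s : ℝ, Measurable fun ω => κ ω s := by
    intro s
    rcases le_or_gt s 0 with h | h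
    · have : (fun ω => κ ω s) = fun _ => (0:ℝ) := funext fun ω => hκ_zero ω s h
      rw [this]; exact measurable_const
    · apply measurable_of_Ioi
      intro x
      rcases lt_or_ge x 0 with hx | hx
      · have : (fun ω => κ ω s) ⁻¹' Set.Ioi x = Set.univ := by
          ext ω; simp only [Set.mem_preimage, Set.mem_Ioi, Set.mem_univ, iff_true]
          exact lt_of_lt_of_le hx (hκ_nonneg ω s)
        rw [this]; exact MeasurableSet.univ
      · have : (fun ω => κ ω s) ⁻¹' Set.Ioi x = (τ x) ⁻¹' Set.Iio (ENNReal.ofReal s) := by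
          ext ω
          simp only [Set.mem_preimage, Set.mem_Ioi, Set.mem_Iio]
          exact key ω s x h hx
        rw [this]
        exact (hτ_meas x) measurableSet_Iio
  -- joint measurability of κ
  have hκ_joint : Measurable (Function.uncurry fun (t : ℝ) (ω : Ω) => κ ω t) :=
    measurable_uncurry_of_continuous_of_measurable (fun ω => hκ_cont ω) hκ_meas
  -- if τ_u = ∞ then κ ≤ u everywhere
  have hτtop : ∀ ω (u : ℝ), 0 ≤ u → τ u ω = ⊤ → ∀ t, κ ω t ≤ u := by
    intro ω u hu htop t
    by_contra hc
    push_neg at hc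
    have ht0 : 0 < t := by
      by_contra h0
      push_neg at h0
      rw [hκ_zero ω t h0] at hc
      exact absurd hc (not_lt.2 hu)
    have hle : τ u ω ≤ ENNReal.ofReal t := by
      rw [hτ]; exact sInf_le ⟨t, ht0, rfl, hc⟩
    rw [htop] at hle
    exact absurd (hle.trans_lt ENNReal.ofReal_lt_top) (lt_irrefl _)
  -- if τ_u < ∞ then κ (τ_u) = u
  have hκτ : ∀ ω (u : ℝ), 0 ≤ u → τ u ω ≠ ⊤ → κ ω ((τ u ω).toReal) = u := by
    intro ω u hu hne
    set T := (τ u ω).toReal with hT_def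
    have hτeq : τ u ω = ENNReal.ofReal T := (ENNReal.ofReal_toReal hne).symm
    have hT0 : 0 ≤ T := ENNReal.toReal_nonneg
    have h1 : u ≤ κ ω T := by
      by_contra hc
      push_neg at hc
      have hopen : IsOpen {t : ℝ | κ ω t < u} := isOpen_lt (hκ_cont ω) continuous_const
      obtain ⟨ε, hε, hball⟩ := Metric.isOpen_iff.1 hopen T hc
      have hlt : τ u ω < ENNReal.ofReal (T + ε / 2) := by
        rw [hτeq]
        exact (ENNReal.ofReal_lt_ofReal_iff (by linarith)).2 (by linarith)
      rw [hτ] at hlt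
      obtain ⟨x, ⟨t, ht0, rfl, hkt⟩, hxs⟩ := sInf_lt_iff.1 hlt
      have htlt : t < T + ε / 2 := by
        by_contra hcc
        push_neg at hcc
        exact absurd hxs (not_lt.2 (ENNReal.ofReal_le_ofReal hcc))
      have htge : T ≤ t := by
        have hh : ENNReal.ofReal T ≤ ENNReal.ofReal t := by
          rw [← hτeq, hτ]
          exact sInf_le ⟨t, ht0, rfl, hkt⟩
        exact (ENNReal.ofReal_le_ofReal_iff ht0.le).1 hh
      have : κ ω t < u := by
        apply hball
        rw [Metric.mem_ball, Real.dist_eq, abs_lt]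
        constructor <;> linarith
      exact absurd hkt (not_lt.2 this.le)
    have h2 : κ ω T ≤ u := by
      by_contra hc
      push_neg at hc
      have hT0' : 0 < T := by
        rcases hT0.lt_or_eq with h | h
        · exact h
        · exfalso
          rw [hκ_zero ω T (le_of_eq h.symm)] at hc
          exact absurd hc (not_lt.2 hu)
      have hopen : IsOpen {t : ℝ | u < κ ω t} := isOpen_lt continuous_const (hκ_cont ω)
      obtain ⟨ε, hε, hball⟩ := Metric.isOpen_iff.1 hopen T hc
      set t := max (T / 2) (T - ε / 2) with ht_def
      have ht1 : 0 < t := lt_max_of_lt_left (by linarith)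
      have ht2 : t < T := max_lt (by linarith) (by linarith)
      have htmem : u < κ ω t := by
        apply hball
        rw [Metric.mem_ball, Real.dist_eq, abs_lt]
        constructor
        · have : T - ε / 2 ≤ t := le_max_right _ _
          linarith
        · linarith
      have hle : τ u ω ≤ ENNReal.ofReal t := by
        rw [hτ]; exact sInf_le ⟨t, ht1, rfl, htmem⟩
      rw [hτeq] at hle
      exact absurd ((ENNReal.ofReal_le_ofReal_iff ht1.le).1 hle) (not_le.2 ht2)
    linarith
  -- left limits of κ agree with κ
  have hLL : ∀ ω (x : ℝ), Function.leftLim (κ ω) x = κ ω x := by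
    intro ω x
    refine leftLim_eq_of_tendsto
      (((hκ_cont ω).tendsto x).mono_left nhdsWithin_le_nhds)
  -- measurability of the domain of integration
  have hA_meas : ∀ ω, MeasurableSet {t : ℝ | 0 < t ∧ ENNReal.ofReal t ≤ τ a ω} := by
    intro ω
    have : {t : ℝ | 0 < t ∧ ENNReal.ofReal t ≤ τ a ω}
        = Set.Ioi 0 ∩ (ENNReal.ofReal ⁻¹' Set.Iic (τ a ω)) := rfl
    rw [this]
    exact measurableSet_Ioi.inter (ENNReal.measurable_ofReal measurableSet_Iic)
  -- Step 1: pathwise rewriting of the Stieltjes integral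
  have step1 : ∀ ω, (∫⁻ t in {t : ℝ | 0 < t ∧ ENNReal.ofReal t ≤ τ a ω},
      ENNReal.ofReal (Real.exp (-β * t))
      ∂((⟨κ ω, hκ_mono ω, fun x => (hκ_cont ω).continuousWithinAt⟩ :
          StieltjesFunction ℝ).measure))
      = ∫⁻ s in Set.Ioi 0, g s * ENNReal.ofReal (min (κ ω s) a) := by
    intro ω
    set f : StieltjesFunction ℝ :=
      ⟨κ ω, hκ_mono ω, fun x => (hκ_cont ω).continuousWithinAt⟩ with hf_def
    set A : Set ℝ := {t : ℝ | 0 < t ∧ ENNReal.ofReal t ≤ τ a ω} with hA_def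
    have hAm : MeasurableSet A := hA_meas ω
    have hfcoe : ∀ x, f x = κ ω x := fun x => rfl
    -- the measure of A ∩ Iio s
    have hmeasA : ∀ s : ℝ, 0 < s →
        f.measure (A ∩ Set.Iio s) = ENNReal.ofReal (min (κ ω s) a) := by
      intro s hs
      rcases eq_or_ne (τ a ω) ⊤ with htop | hne
      · have hAeq : A ∩ Set.Iio s = Set.Ioo 0 s := by
          ext t
          simp only [hA_def, htop, Set.mem_inter_iff, Set.mem_setOf_eq, le_top, and_true,
            Set.mem_Iio, Set.mem_Ioo]
        rw [hAeq, f.measure_Ioo, hLL ω s]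
        have : κ ω s ≤ a := hτtop ω a ha.le htop s
        rw [min_eq_left this]
        show ENNReal.ofReal (κ ω s - κ ω 0) = _
        rw [hκ0 ω, sub_zero]
      · set T := (τ a ω).toReal with hT_def
        have hτa : τ a ω = ENNReal.ofReal T := (ENNReal.ofReal_toReal hne).symm
        have hT0 : 0 ≤ T := ENNReal.toReal_nonneg
        have hκT : κ ω T = a := hκτ ω a ha.le hne
        have hAeq : A = Set.Ioc 0 T := by
          ext t
          simp only [hA_def, Set.mem_setOf_eq, Set.mem_Ioc, hτa]
          constructor
          · rintro ⟨ht, hle⟩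
            exact ⟨ht, (ENNReal.ofReal_le_ofReal_iff hT0).1 hle⟩
          · rintro ⟨ht, hle⟩
            exact ⟨ht, ENNReal.ofReal_le_ofReal hle⟩
        rcases le_or_gt s T with hsT | hTs
        · have hAeq2 : A ∩ Set.Iio s = Set.Ioo 0 s := by
            rw [hAeq]
            ext t
            simp only [Set.mem_inter_iff, Set.mem_Ioc, Set.mem_Iio, Set.mem_Ioo]
            constructor
            · rintro ⟨⟨h1, _⟩, h3⟩; exact ⟨h1, h3⟩
            · rintro ⟨h1, h2⟩; exact ⟨⟨h1, h2.le.trans hsT⟩, h2⟩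
          rw [hAeq2, f.measure_Ioo, hLL ω s]
          have : κ ω s ≤ a := hκT ▸ hκ_mono ω hsT
          rw [min_eq_left this]
          show ENNReal.ofReal (κ ω s - κ ω 0) = _
          rw [hκ0 ω, sub_zero]
        · have hAeq2 : A ∩ Set.Iio s = Set.Ioc 0 T := by
            rw [hAeq]
            ext t
            simp only [Set.mem_inter_iff, Set.mem_Ioc, Set.mem_Iio]
            constructor
            · rintro ⟨h1, _⟩; exact h1
            · rintro ⟨h1, h2⟩; exact ⟨⟨h1, h2⟩, h2.trans_lt hTs⟩
          rw [hAeq2, f.measure_Ioc]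
          have : a ≤ κ ω s := hκT ▸ hκ_mono ω hTs.le
          rw [min_eq_right this]
          show ENNReal.ofReal (κ ω T - κ ω 0) = _
          rw [hκ0 ω, sub_zero, hκT]
    -- double-integral representation and Tonelli
    have hswap : AEMeasurable
        (Function.uncurry fun (t s : ℝ) => if t ∈ A ∧ t < s then g s else 0)
        (f.measure.prod volume) := by
      apply Measurable.aemeasurable
      apply Measurable.ite
      · exact (measurable_fst hAm).inter (measurableSet_lt measurable_fst measurable_snd)
      · exact hg_meas.comp measurable_snd
      · exact measurable_const
    calc ∫⁻ t in A, ENNReal.ofReal (Real.exp (-β * t)) ∂f.measure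
        = ∫⁻ t in A, (∫⁻ s in Set.Ioi t, g s) ∂f.measure := by
          refine lintegral_congr fun t => ?_
          rw [aux_exp_lintegral hβ t]
      _ = ∫⁻ t, (∫⁻ s, (if t ∈ A ∧ t < s then g s else 0)) ∂f.measure := by
          rw [← lintegral_indicator hAm]
          refine lintegral_congr fun t => ?_
          by_cases ht : t ∈ A
          · rw [Set.indicator_of_mem ht, ← lintegral_indicator measurableSet_Ioi]
            refine lintegral_congr fun s => ?_
            simp [Set.indicator, Set.mem_Ioi, ht]
          · simp [Set.indicator_of_notMem ht, ht]
      _ = ∫⁻ s, (∫⁻ t, (if t ∈ A ∧ t < s then g s else 0) ∂f.measure) :=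
          lintegral_lintegral_swap hswap
      _ = ∫⁻ s, g s * f.measure (A ∩ Set.Iio s) := by
          refine lintegral_congr fun s => ?_
          have hfun : (fun t => if t ∈ A ∧ t < s then g s else 0)
              = (A ∩ Set.Iio s).indicator (fun _ => g s) := by
            ext t
            simp [Set.indicator, Set.mem_inter_iff, Set.mem_Iio]
          rw [hfun, lintegral_indicator (hAm.inter measurableSet_Iio), setLIntegral_const]
      _ = ∫⁻ s, (Set.Ioi 0).indicator
            (fun s => g s * ENNReal.ofReal (min (κ ω s) a)) s := by
          refine lintegral_congr fun s => ?_
          rcases lt_or_ge 0 s with hs | hs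
          · rw [Set.indicator_of_mem (Set.mem_Ioi.2 hs), hmeasA s hs]
          · rw [Set.indicator_of_notMem (by simpa using not_lt.2 hs : s ∉ Set.Ioi 0)]
            have : A ∩ Set.Iio s = ∅ := by
              ext t
              simp only [hA_def, Set.mem_inter_iff, Set.mem_setOf_eq, Set.mem_Iio,
                Set.mem_empty_iff_false, iff_false, not_and]
              rintro ⟨ht, _⟩ hts
              linarith
            rw [this]
            simp
      _ = ∫⁻ s in Set.Ioi 0, g s * ENNReal.ofReal (min (κ ω s) a) :=
          lintegral_indicator measurableSet_Ioi _
  -- Step 2: pathwise, rewrite min as an integral over u and swap s and u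
  have step2 : ∀ ω, (∫⁻ s in Set.Ioi 0, g s * ENNReal.ofReal (min (κ ω s) a))
      = ∫⁻ u in Set.Ico 0 a, ∫⁻ s in Set.Ioi 0,
          g s * (if u < κ ω s then 1 else 0) := by
    intro ω
    have hmin : ∀ s : ℝ, ENNReal.ofReal (min (κ ω s) a)
        = ∫⁻ u in Set.Ico 0 a, (if u < κ ω s then 1 else 0) := by
      intro s
      have h1 : (fun u : ℝ => if u < κ ω s then (1:ℝ≥0∞) else 0)
          = (Set.Iio (κ ω s)).indicator (fun _ => 1) := by
        ext u
        simp [Set.indicator, Set.mem_Iio]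
      rw [h1, ← lintegral_indicator measurableSet_Ico, Set.indicator_indicator,
        lintegral_indicator_const (measurableSet_Ico.inter measurableSet_Iio) 1, one_mul]
      have h2 : Set.Ico 0 a ∩ Set.Iio (κ ω s) = Set.Ico 0 (min a (κ ω s)) := by
        ext u
        simp only [Set.mem_inter_iff, Set.mem_Ico, Set.mem_Iio, lt_min_iff]
        tauto
      rw [h2, Real.volume_Ico, sub_zero, min_comm]
    have hswap : AEMeasurable
        (Function.uncurry fun (s u : ℝ) => g s * (if u < κ ω s then 1 else 0))
        ((volume.restrict (Set.Ioi 0)).prod (volume.restrict (Set.Ico 0 a))) := by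
      apply Measurable.aemeasurable
      refine (hg_meas.comp measurable_fst).mul ?_
      refine Measurable.ite ?_ measurable_const measurable_const
      exact measurableSet_lt measurable_snd ((hκ_cont ω).measurable.comp measurable_fst)
    calc ∫⁻ s in Set.Ioi 0, g s * ENNReal.ofReal (min (κ ω s) a)
        = ∫⁻ s in Set.Ioi 0, ∫⁻ u in Set.Ico 0 a,
            g s * (if u < κ ω s then 1 else 0) := by
          refine lintegral_congr fun s => ?_
          rw [hmin s, ← lintegral_const_mul' _ _ ENNReal.ofReal_ne_top]
      _ = ∫⁻ u in Set.Ico 0 a, ∫⁻ s in Set.Ioi 0,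
            g s * (if u < κ ω s then 1 else 0) :=
          lintegral_lintegral_swap hswap
  -- Step 3: swap ω and u
  have hH_meas : Measurable (Function.uncurry fun (ω : Ω) (u : ℝ) =>
      ∫⁻ s in Set.Ioi 0, g s * (if u < κ ω s then 1 else 0)) := by
    apply Measurable.lintegral_prod_right'
      (f := fun q : (Ω × ℝ) × ℝ => g q.2 * (if q.1.2 < κ q.1.1 q.2 then 1 else 0))
    refine (hg_meas.comp measurable_snd).mul ?_
    refine Measurable.ite ?_ measurable_const measurable_const
    exact measurableSet_lt (measurable_snd.comp measurable_fst)
      (hκ_joint.comp ((measurable_snd.prodMk (measurable_fst.comp measurable_fst))))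
  have step3 : ∫⁻ ω, (∫⁻ u in Set.Ico 0 a, ∫⁻ s in Set.Ioi 0,
      g s * (if u < κ ω s then 1 else 0)) ∂P
      = ∫⁻ u in Set.Ico 0 a, (∫⁻ ω, (∫⁻ s in Set.Ioi 0,
        g s * (if u < κ ω s then 1 else 0)) ∂P) :=
    lintegral_lintegral_swap hH_meas.aemeasurable
  -- Step 4: for each u ∈ [0, a), the inner integral is e^{-uψ}
  have step4 : ∀ u : ℝ, 0 ≤ u → (∫⁻ ω, (∫⁻ s in Set.Ioi 0,
      g s * (if u < κ ω s then 1 else 0)) ∂P) = ENNReal.ofReal (Real.exp (-u * ψ)) := by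
    intro u hu
    rw [← h_laplace u hu]
    refine lintegral_congr fun ω => ?_
    have hptwise : ∫⁻ s in Set.Ioi 0, g s * (if u < κ ω s then 1 else 0)
        = ∫⁻ s in Set.Ioi 0, g s * (if τ u ω < ENNReal.ofReal s then 1 else 0) := by
      refine setLIntegral_congr_fun measurableSet_Ioi
        (fun s hs => ?_)
      congr 1
      simp only [key ω s u hs hu]
    rw [hptwise]
    rcases eq_or_ne (τ u ω) ⊤ with htop | hne
    · rw [htop]
      simp [not_top_lt]
    · set T := (τ u ω).toReal with hT_def
      have hτu : τ u ω = ENNReal.ofReal T := (ENNReal.ofReal_toReal hne).symm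
      have hT0 : 0 ≤ T := ENNReal.toReal_nonneg
      rw [if_pos (lt_top_iff_ne_top.2 hne)]
      have h1 : ∫⁻ s in Set.Ioi 0, g s * (if τ u ω < ENNReal.ofReal s then 1 else 0)
          = ∫⁻ s in Set.Ioi 0, (Set.Ioi T).indicator g s := by
        refine setLIntegral_congr_fun measurableSet_Ioi
          (fun s hs => ?_)
        rw [hτu]
        have : ENNReal.ofReal T < ENNReal.ofReal s ↔ T < s :=
          ENNReal.ofReal_lt_ofReal_iff hs
        by_cases hT : T < s
        · rw [if_pos (this.2 hT), Set.indicator_of_mem (Set.mem_Ioi.2 hT), mul_one]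
        · rw [if_neg (fun hc => hT (this.1 hc)),
            Set.indicator_of_notMem (by simpa using hT : s ∉ Set.Ioi T), mul_zero]
      rw [h1, ← lintegral_indicator measurableSet_Ioi, Set.indicator_indicator]
      have h2 : Set.Ioi (0:ℝ) ∩ Set.Ioi T = Set.Ioi T := by
        rw [Set.Ioi_inter_Ioi, max_eq_right hT0]
      rw [h2, lintegral_indicator measurableSet_Ioi]
      exact aux_exp_lintegral hβ T
  -- put everything together
  calc ∫⁻ ω, (∫⁻ t in {t : ℝ | 0 < t ∧ ENNReal.ofReal t ≤ τ a ω},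
        ENNReal.ofReal (Real.exp (-β * t))
        ∂((⟨κ ω, hκ_mono ω, fun x => (hκ_cont ω).continuousWithinAt⟩ :
            StieltjesFunction ℝ).measure)) ∂P
      = ∫⁻ ω, (∫⁻ u in Set.Ico 0 a, ∫⁻ s in Set.Ioi 0,
          g s * (if u < κ ω s then 1 else 0)) ∂P := by
        refine lintegral_congr fun ω => ?_
        rw [step1 ω, step2 ω]
    _ = ∫⁻ u in Set.Ico 0 a, (∫⁻ ω, (∫⁻ s in Set.Ioi 0,
          g s * (if u < κ ω s then 1 else 0)) ∂P) := step3
    _ = ∫⁻ u in Set.Ico 0 a, ENNReal.ofReal (Real.exp (-u * ψ)) := by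
        refine setLIntegral_congr_fun measurableSet_Ico
          (fun u hu => ?_)
        exact step4 u hu.1
    _ = ENNReal.ofReal ((1 - Real.exp (-a * ψ)) / ψ) := aux_final_lintegral hψ ha
end
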